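/- arXiv:2502.13368 — 4 statements merged into one kernel-verified Lean document; each statement's English description precedes it below -/
import Mathlib

section
/- In a flow network with integer edge capacities, a source s and a sink t, there exists a maximum flow of minimum cost that is integral, i.e., assigns an integer value to every edge. -/
open Finset

variable {V : Type*} [Fintype V] [DecidableEq V]

/-- `f` is a flow on the network with integer capacities `c`, source `s` and
sink `t`: it is nonnegative, respects capacities, and is conserved at every
vertex other than `s` and `t`. -/
def IsFlow (c : V → V → ℕ) (s t : V) (f : V → V → ℝ) : Prop :=
  (∀ u v, 0 ≤ f u v ∧ f u v ≤ (c u v : ℝ)) ∧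
  ∀ v, v ≠ s → v ≠ t → ∑ u, f u v = ∑ u, f v u

/-- The value of a flow: net flow out of the source `s`. -/
noncomputable def flowValue (s : V) (f : V → V → ℝ) : ℝ :=
  ∑ u, f s u - ∑ u, f u s

/-- The cost of a flow with respect to edge costs `w`. -/
noncomputable def flowCost (w : V → V → ℝ) (f : V → V → ℝ) : ℝ :=
  ∑ u, ∑ v, f u v * w u v

namespace IntegralFlowAux

/-- `x` is an integer. -/
def IsInt (x : ℝ) : Prop := ∃ z : ℤ, x = (z : ℝ)

lemma isInt_zero : IsInt (0 : ℝ) := ⟨0, by norm_num⟩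

lemma isInt_add {x y : ℝ} (hx : IsInt x) (hy : IsInt y) : IsInt (x + y) := by
  obtain ⟨a, rfl⟩ := hx; obtain ⟨b, rfl⟩ := hy
  exact ⟨a + b, by push_cast; ring⟩

lemma isInt_sub {x y : ℝ} (hx : IsInt x) (hy : IsInt y) : IsInt (x - y) := by
  obtain ⟨a, rfl⟩ := hx; obtain ⟨b, rfl⟩ := hy
  exact ⟨a - b, by push_cast; ring⟩

lemma isInt_sum {ι : Type*} (S : Finset ι) (g : ι → ℝ)
    (h : ∀ i ∈ S, IsInt (g i)) : IsInt (∑ i ∈ S, g i) :=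
  Finset.sum_induction g IsInt (fun _ _ => isInt_add) isInt_zero h

/-- the edge `(u,v)` is fractional for `f`. -/
def Frk (f : V → V → ℝ) (u v : V) : Prop := ¬ IsInt (f u v)

/-- adjacency in the graph of fractional edges. -/
def Adj' (f : V → V → ℝ) (u v : V) : Prop := u ≠ v ∧ (Frk f u v ∨ Frk f v u)

lemma Adj'.symm {f : V → V → ℝ} {u v : V} (h : Adj' f u v) : Adj' f v u :=
  ⟨h.1.symm, h.2.symm⟩

section Combinatorial

variable (f : V → V → ℝ) (s t : V)

/-- Degree lemma: at a conserved vertex, a fractional edge is never alone. -/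
lemma deg (hcons : ∀ v, v ≠ s → v ≠ t → ∑ u, f u v = ∑ u, f v u)
    (hdb : ∀ p q, Frk f p q → ¬ Frk f q p)
    {v u : V} (hv : v ≠ s) (hv' : v ≠ t) (h : Adj' f u v) :
    ∃ u', Adj' f u' v ∧ u' ≠ u := by
  by_contra hcon
  push_neg at hcon
  have h0 : ∑ x : V, (f x v - f v x) = 0 := by
    rw [Finset.sum_sub_distrib, hcons v hv hv', sub_self]
  have hrest : IsInt (∑ x ∈ Finset.univ.erase u, (f x v - f v x)) := by
    refine isInt_sum _ _ ?_
    intro x hx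
    have hxu : x ≠ u := (Finset.mem_erase.mp hx).1
    by_cases hxv : x = v
    · subst hxv; rw [sub_self]; exact isInt_zero
    · have hna : ¬ Adj' f x v := fun ha => hxu (hcon x ha)
      have h2 : ¬ (Frk f x v ∨ Frk f v x) := fun hor => hna ⟨hxv, hor⟩
      rw [not_or] at h2
      exact isInt_sub (not_not.mp h2.1) (not_not.mp h2.2)
  have hu : ¬ IsInt (f u v - f v u) := by
    rcases h.2 with h1 | h1
    · have h2 : IsInt (f v u) := not_not.mp (hdb u v h1)
      intro hsum
      apply h1
      have : f u v = (f u v - f v u) + f v u := by ring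
      rw [this]; exact isInt_add hsum h2
    · have h2 : IsInt (f u v) := not_not.mp (fun hf => hdb v u h1 hf)
      intro hsum
      apply h1
      have : f v u = f u v - (f u v - f v u) := by ring
      rw [this]; exact isInt_sub h2 hsum
  apply hu
  have hsplit : ∑ x : V, (f x v - f v x)
      = (f u v - f v u) + ∑ x ∈ Finset.univ.erase u, (f x v - f v x) :=
    (Finset.add_sum_erase Finset.univ _ (Finset.mem_univ u)).symm
  have : f u v - f v u = 0 - ∑ x ∈ Finset.univ.erase u, (f x v - f v x) := by
    rw [← h0, hsplit]; ring
  rw [this]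
  exact isInt_sub isInt_zero hrest

/-- a (vertex-simple) fractional cycle. -/
def IsCyc (K : ℕ) (z : ℕ → V) : Prop :=
  3 ≤ K ∧ (∀ j < K, Adj' f (z j) (z (j + 1))) ∧ z K = z 0 ∧
    ∀ i ≤ K - 1, ∀ j ≤ K - 1, z i = z j → i = j

/-- Every endpoint of a maximal fractional path is `s` or `t`, or there is a
fractional cycle. -/
lemma endpoint (hcons : ∀ v, v ≠ s → v ≠ t → ∑ u, f u v = ∑ u, f v u)
    (hdb : ∀ p q, Frk f p q → ¬ Frk f q p)
    {k : ℕ} {x : ℕ → V} (hadj : ∀ i < k, Adj' f (x i) (x (i + 1)))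
    (hinj : ∀ i ≤ k, ∀ j ≤ k, x i = x j → i = j) (hk : 1 ≤ k)
    (hmax : ∀ (k' : ℕ) (x' : ℕ → V), (∀ i < k', Adj' f (x' i) (x' (i + 1))) →
      (∀ i ≤ k', ∀ j ≤ k', x' i = x' j → i = j) → k' ≤ k) :
    x k = s ∨ x k = t ∨ ∃ K z, IsCyc f K z := by
  by_cases hs : x k = s
  · exact Or.inl hs
  by_cases ht : x k = t
  · exact Or.inr (Or.inl ht)
  right; right
  have hk1 : k - 1 + 1 = k := by omega
  have hlast : Adj' f (x (k - 1)) (x k) := by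
    have := hadj (k - 1) (by omega); rwa [hk1] at this
  obtain ⟨u', hu'adj, hu'ne⟩ := deg f s t hcons hdb hs ht hlast
  by_cases hmem : ∃ i, i ≤ k ∧ x i = u'
  · obtain ⟨i, hik, hxi⟩ := hmem
    have hik' : i + 2 ≤ k := by
      have h1 : i ≠ k := by rintro rfl; exact hu'adj.1 hxi.symm
      have h2 : i ≠ k - 1 := by rintro rfl; exact hu'ne hxi.symm
      omega
    refine ⟨k - i + 1, fun j => if j ≤ k - i then x (i + j) else x i, by omega, ?_, ?_, ?_⟩
    · intro j hj
      by_cases hj2 : j < k - i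
      · have e1 : j ≤ k - i := le_of_lt hj2
        have e2 : j + 1 ≤ k - i := hj2
        simp only [if_pos e1, if_pos e2]
        have h3 := hadj (i + j) (by omega)
        rwa [show i + (j + 1) = i + j + 1 by ring]
      · have hj3 : j = k - i := by omega
        subst hj3
        simp only [if_pos (le_refl (k - i)), if_neg (show ¬ (k - i + 1 ≤ k - i) by omega)]
        rw [show i + (k - i) = k by omega]
        rw [← hxi] at hu'adj
        exact hu'adj.symm
    · simp only [if_neg (show ¬ (k - i + 1 ≤ k - i) by omega),
        if_pos (Nat.zero_le (k - i)), Nat.add_zero]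
    · intro i1 h1 j1 h2 he
      have h1' : i1 ≤ k - i := by omega
      have h2' : j1 ≤ k - i := by omega
      simp only [if_pos h1', if_pos h2'] at he
      have := hinj (i + i1) (by omega) (i + j1) (by omega) he
      omega
  · push_neg at hmem
    exfalso
    have hadj' : ∀ i < k + 1,
        Adj' f ((fun i => if i ≤ k then x i else u') i)
          ((fun i => if i ≤ k then x i else u') (i + 1)) := by
      intro i hi
      by_cases hik : i < k
      · simp only [if_pos (le_of_lt hik), if_pos (show i + 1 ≤ k from hik)]
        exact hadj i hik
      · have hik2 : i = k := by omega
        simp only [if_pos (show i ≤ k by omega), if_neg (show ¬ (i + 1 ≤ k) by omega)]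
        rw [hik2]
        exact hu'adj.symm
    have hinj' : ∀ i ≤ k + 1, ∀ j ≤ k + 1,
        (fun i => if i ≤ k then x i else u') i = (fun i => if i ≤ k then x i else u') j
          → i = j := by
      intro i h1 j h2 he
      by_cases hik : i ≤ k <;> by_cases hjk : j ≤ k
      · simp only [if_pos hik, if_pos hjk] at he; exact hinj i hik j hjk he
      · simp only [if_pos hik, if_neg hjk] at he; exact absurd he (hmem i hik)
      · simp only [if_neg hik, if_pos hjk] at he; exact absurd he.symm (hmem j hjk)
      · omega
    have := hmax (k + 1) _ hadj' hinj'
    omega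

/-- From a fractional edge we get a fractional cycle or a fractional simple
`s`–`t` path. -/
lemma exists_cycle_or_path (hcons : ∀ v, v ≠ s → v ≠ t → ∑ u, f u v = ∑ u, f v u)
    (hdb : ∀ p q, Frk f p q → ¬ Frk f q p)
    {a b : V} (hab : Adj' f a b) :
    (∃ K z, IsCyc f K z) ∨
    (∃ (K : ℕ) (z : ℕ → V), 1 ≤ K ∧ (∀ j < K, Adj' f (z j) (z (j + 1))) ∧
      (∀ i ≤ K, ∀ j ≤ K, z i = z j → i = j) ∧
      ((z 0 = s ∧ z K = t) ∨ (z 0 = t ∧ z K = s))) := by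
  classical
  set P : ℕ → Prop := fun k => ∃ x : ℕ → V,
    (∀ i < k, Adj' f (x i) (x (i + 1))) ∧ (∀ i ≤ k, ∀ j ≤ k, x i = x j → i = j) with hP
  have hP1 : P 1 := by
    rw [hP]
    refine ⟨fun i => if i = 0 then a else b, ?_, ?_⟩
    · intro i hi
      have : i = 0 := by omega
      subst this
      simpa using hab
    · intro i h1 j h2 he
      have hi : i = 0 ∨ i = 1 := by omega
      have hj : j = 0 ∨ j = 1 := by omega
      rcases hi with rfl | rfl <;> rcases hj with rfl | rfl
      · rfl
      · exfalso
        simp only [if_pos rfl, if_neg (show ¬ (1 : ℕ) = 0 by norm_num)] at he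
        exact hab.1 he
      · exfalso
        simp only [if_pos rfl, if_neg (show ¬ (1 : ℕ) = 0 by norm_num)] at he
        exact hab.1 he.symm
      · rfl
  have hbound : ∀ k, P k → k ≤ Fintype.card V := by
    intro k hk
    rw [hP] at hk
    obtain ⟨x, _, hinj⟩ := hk
    have : (Finset.range (k + 1)).card ≤ (Finset.univ : Finset V).card := by
      apply Finset.card_le_card_of_injOn x (fun _ _ => Finset.mem_univ _)
      intro i hi j hj he
      simp only [Finset.coe_range, Set.mem_Iio] at hi hj
      exact hinj i (by omega) j (by omega) he
    simp only [Finset.card_range, Finset.card_univ] at this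
    omega
  have hcard : 1 ≤ Fintype.card V := Fintype.card_pos_iff.mpr ⟨a⟩
  set k := Nat.findGreatest P (Fintype.card V) with hkdef
  have hk1 : 1 ≤ k := Nat.le_findGreatest hcard hP1
  have hPk : P k := Nat.findGreatest_spec hcard hP1
  have hmax : ∀ (k' : ℕ) (x' : ℕ → V), (∀ i < k', Adj' f (x' i) (x' (i + 1))) →
      (∀ i ≤ k', ∀ j ≤ k', x' i = x' j → i = j) → k' ≤ k := by
    intro k' x' h1 h2
    by_contra hgt
    have hPk' : P k' := by rw [hP]; exact ⟨x', h1, h2⟩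
    exact Nat.findGreatest_is_greatest (by omega) (hbound k' hPk') hPk'
  rw [hP] at hPk
  obtain ⟨x, hxadj, hxinj⟩ := hPk
  rcases endpoint f s t hcons hdb hxadj hxinj hk1 hmax with hend | hend | hcyc
  rotate_right
  · exact Or.inl hcyc
  all_goals {
    -- x k ∈ {s,t}; now look at the reversed path
    have hyadj : ∀ i < k, Adj' f (x (k - i)) (x (k - (i + 1))) := by
      intro i hi
      have h3 := hxadj (k - i - 1) (by omega)
      rw [show k - i - 1 + 1 = k - i by omega] at h3
      rw [show k - (i + 1) = k - i - 1 by omega]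
      exact h3.symm
    have hyinj : ∀ i ≤ k, ∀ j ≤ k, x (k - i) = x (k - j) → i = j := by
      intro i h1 j h2 he
      have := hxinj (k - i) (by omega) (k - j) (by omega) he
      omega
    rcases endpoint f s t hcons hdb hyadj hyinj hk1 hmax with hend2 | hend2 | hcyc2
    rotate_right
    · exact Or.inl hcyc2
    all_goals {
      right
      rw [Nat.sub_self] at hend2
      refine ⟨k, x, hk1, hxadj, hxinj, ?_⟩
      have hne : x 0 ≠ x k := by
        intro h
        have := hxinj 0 (Nat.zero_le _) k le_rfl h
        omega
      first
      | (exact Or.inl ⟨hend2, hend⟩)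
      | (exact Or.inr ⟨hend2, hend⟩)
      | (exact absurd (hend2.trans hend.symm) hne)
    }
  }

end Combinatorial

section BuildD

variable (f : V → V → ℝ)

lemma sum_ind (p q y : V) (r : ℝ) :
    ∑ u : V, (if u = p ∧ y = q then r else 0) = if y = q then r else 0 := by
  by_cases h : y = q <;> simp [h]

lemma sum_ind' (p q y : V) (r : ℝ) :
    ∑ u : V, (if y = p ∧ u = q then r else 0) = if y = p then r else 0 := by
  by_cases h : y = p <;> simp [h]

open Classical in
/-- Build the perturbation direction from a fractional cycle or path. -/
lemma build_d (K : ℕ) (z : ℕ → V) (hK : 1 ≤ K)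
    (hadj : ∀ j < K, Adj' f (z j) (z (j + 1)))
    (hpair : ∀ j, 1 ≤ j → j < K →
      ¬(z j = z 0 ∧ z (j + 1) = z 1) ∧ ¬(z j = z 1 ∧ z (j + 1) = z 0)) :
    ∃ d : V → V → ℝ, (∃ u v, d u v ≠ 0) ∧ (∀ u v, d u v ≠ 0 → Frk f u v) ∧
      (∀ y, (∑ u, d u y) - (∑ u, d y u)
        = (if y = z K then (1 : ℝ) else 0) - (if y = z 0 then 1 else 0)) := by
  set chi : ℕ → V → V → ℝ := fun j u v =>
    if Frk f (z j) (z (j + 1)) then (if u = z j ∧ v = z (j + 1) then (1 : ℝ) else 0)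
    else (if u = z (j + 1) ∧ v = z j then (-1 : ℝ) else 0) with hchi
  refine ⟨fun u v => ∑ j ∈ Finset.range K, chi j u v, ?_, ?_, ?_⟩
  · -- nonzero
    have hzero : ∀ j ∈ Finset.range K, j ≠ 0 →
        chi j (z 0) (z 1) = 0 ∧ chi j (z 1) (z 0) = 0 := by
      intro j hj hj0
      rw [Finset.mem_range] at hj
      obtain ⟨hp1, hp2⟩ := hpair j (by omega) hj
      rw [hchi]
      constructor
      · by_cases hf1 : Frk f (z j) (z (j + 1))
        · simp only [if_pos hf1]
          rw [if_neg]
          rintro ⟨e1, e2⟩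
          exact hp1 ⟨e1.symm, e2.symm⟩
        · simp only [if_neg hf1]
          rw [if_neg]
          rintro ⟨e1, e2⟩
          exact hp2 ⟨e2.symm, e1.symm⟩
      · by_cases hf1 : Frk f (z j) (z (j + 1))
        · simp only [if_pos hf1]
          rw [if_neg]
          rintro ⟨e1, e2⟩
          exact hp2 ⟨e1.symm, e2.symm⟩
        · simp only [if_neg hf1]
          rw [if_neg]
          rintro ⟨e1, e2⟩
          exact hp1 ⟨e2.symm, e1.symm⟩
    by_cases hf1 : Frk f (z 0) (z 1)
    · refine ⟨z 0, z 1, ?_⟩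
      show (∑ j ∈ Finset.range K, chi j (z 0) (z 1)) ≠ 0
      rw [Finset.sum_eq_single_of_mem 0 (Finset.mem_range.mpr (by omega))
        (fun j hj hj0 => (hzero j hj hj0).1)]
      simp only [hchi, Nat.zero_add]
      rw [if_pos hf1]
      simp
    · refine ⟨z 1, z 0, ?_⟩
      show (∑ j ∈ Finset.range K, chi j (z 1) (z 0)) ≠ 0
      rw [Finset.sum_eq_single_of_mem 0 (Finset.mem_range.mpr (by omega))
        (fun j hj hj0 => (hzero j hj hj0).2)]
      simp only [hchi, Nat.zero_add]
      rw [if_neg hf1]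
      simp
  · -- support
    intro u v h
    have hex : ∃ j ∈ Finset.range K, chi j u v ≠ 0 := by
      by_contra hc
      push_neg at hc
      exact h (Finset.sum_eq_zero hc)
    obtain ⟨j, hj, hne⟩ := hex
    rw [Finset.mem_range] at hj
    have hadjj := hadj j hj
    simp only [hchi] at hne
    by_cases hf1 : Frk f (z j) (z (j + 1))
    · rw [if_pos hf1] at hne
      by_cases he : u = z j ∧ v = z (j + 1)
      · obtain ⟨rfl, rfl⟩ := he
        exact hf1
      · rw [if_neg he] at hne; exact absurd rfl hne
    · rw [if_neg hf1] at hne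
      have hf2 : Frk f (z (j + 1)) (z j) := hadjj.2.resolve_left hf1
      by_cases he : u = z (j + 1) ∧ v = z j
      · obtain ⟨rfl, rfl⟩ := he
        exact hf2
      · rw [if_neg he] at hne; exact absurd rfl hne
  · -- telescoping conservation
    intro y
    have hnet : ∀ j, (∑ u : V, chi j u y) - (∑ u : V, chi j y u)
        = (if y = z (j + 1) then (1 : ℝ) else 0) - (if y = z j then 1 else 0) := by
      intro j
      by_cases hf1 : Frk f (z j) (z (j + 1))
      · simp only [hchi, if_pos hf1, sum_ind, sum_ind']
      · simp only [hchi, if_neg hf1, sum_ind, sum_ind']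
        split_ifs <;> ring
    have hswap : (∑ u : V, ∑ j ∈ Finset.range K, chi j u y)
        - (∑ u : V, ∑ j ∈ Finset.range K, chi j y u)
        = ∑ j ∈ Finset.range K, ((∑ u : V, chi j u y) - (∑ u : V, chi j y u)) := by
      rw [Finset.sum_sub_distrib, Finset.sum_comm (s := Finset.univ),
        Finset.sum_comm (s := Finset.univ)]
    rw [hswap]
    rw [show (∑ j ∈ Finset.range K, ((∑ u : V, chi j u y) - (∑ u : V, chi j y u)))
        = ∑ j ∈ Finset.range K,
          ((if y = z (j + 1) then (1 : ℝ) else 0) - (if y = z j then 1 else 0)) from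
      Finset.sum_congr rfl fun j _ => hnet j]
    exact Finset.sum_range_sub (fun j => if y = z j then (1 : ℝ) else 0) K

/-- Core combinatorial lemma: a conserved `f` with a fractional edge admits a
nonzero conserved perturbation direction supported on fractional edges. -/
lemma core (s t : V)
    (hcons : ∀ v, v ≠ s → v ≠ t → ∑ u, f u v = ∑ u, f v u)
    {a b : V} (hab : Frk f a b) :
    ∃ d : V → V → ℝ, (∃ u v, d u v ≠ 0) ∧ (∀ u v, d u v ≠ 0 → Frk f u v) ∧
      (∀ y, y ≠ s → y ≠ t → ∑ u, d u y = ∑ u, d y u) := by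
  classical
  by_cases hdb : ∃ p q, Frk f p q ∧ Frk f q p
  · obtain ⟨p, q, h1, h2⟩ := hdb
    refine ⟨fun u v => (if u = p ∧ v = q then (1 : ℝ) else 0)
      + (if u = q ∧ v = p then 1 else 0), ⟨p, q, ?_⟩, ?_, ?_⟩
    · show ((if p = p ∧ q = q then (1 : ℝ) else 0) + if p = q ∧ q = p then 1 else 0) ≠ 0
      rw [if_pos ⟨rfl, rfl⟩]
      by_cases e2 : p = q ∧ q = p
      · rw [if_pos e2]; norm_num
      · rw [if_neg e2]; norm_num
    · intro u v h
      by_cases e1 : u = p ∧ v = q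
      · obtain ⟨rfl, rfl⟩ := e1; exact h1
      · by_cases e2 : u = q ∧ v = p
        · obtain ⟨rfl, rfl⟩ := e2; exact h2
        · simp [e1, e2] at h
    · intro y _ _
      rw [Finset.sum_add_distrib, Finset.sum_add_distrib, sum_ind, sum_ind,
        sum_ind', sum_ind']
      ring
  · push_neg at hdb
    have hne : a ≠ b := by rintro rfl; exact hdb a a hab hab
    have hAdj : Adj' f a b := ⟨hne, Or.inl hab⟩
    rcases exists_cycle_or_path f s t hcons hdb hAdj with ⟨K, z, hcyc⟩ | hpath
    · obtain ⟨hK3, hadj, hKz, hinj⟩ := hcyc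
      have hpair : ∀ j, 1 ≤ j → j < K →
          ¬(z j = z 0 ∧ z (j + 1) = z 1) ∧ ¬(z j = z 1 ∧ z (j + 1) = z 0) := by
        intro j h1 h2
        constructor
        · rintro ⟨e1, _⟩
          have := hinj j (by omega) 0 (by omega) e1
          omega
        · rintro ⟨e1, e2⟩
          have hj1 : j = 1 := hinj j (by omega) 1 (by omega) e1
          subst hj1
          have := hinj 2 (by omega) 0 (by omega) e2
          omega
      obtain ⟨d, hd0, hds, hdnet⟩ := build_d f K z (by omega) hadj hpair
      refine ⟨d, hd0, hds, ?_⟩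
      intro y _ _
      have := hdnet y
      rw [hKz] at this
      rw [sub_self] at this
      linarith [this]
    · obtain ⟨K, z, hK1, hadj, hinj, hends⟩ := hpath
      have hpair : ∀ j, 1 ≤ j → j < K →
          ¬(z j = z 0 ∧ z (j + 1) = z 1) ∧ ¬(z j = z 1 ∧ z (j + 1) = z 0) := by
        intro j h1 h2
        constructor
        · rintro ⟨e1, _⟩
          have := hinj j (by omega) 0 (by omega) e1
          omega
        · rintro ⟨e1, e2⟩
          have hj1 : j = 1 := hinj j (by omega) 1 (by omega) e1
          subst hj1
          have := hinj 2 (by omega) 0 (by omega) e2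
          omega
      obtain ⟨d, hd0, hds, hdnet⟩ := build_d f K z hK1 hadj hpair
      refine ⟨d, hd0, hds, ?_⟩
      intro y hys hyt
      have h0 : y ≠ z 0 := by rcases hends with ⟨e, _⟩ | ⟨e, _⟩ <;> rw [e] <;> assumption
      have hKe : y ≠ z K := by rcases hends with ⟨_, e⟩ | ⟨_, e⟩ <;> rw [e] <;> assumption
      have := hdnet y
      rw [if_neg h0, if_neg hKe, sub_self] at this
      linarith [this]

end BuildD

open Classical in
/-- the number of fractional edges. -/
noncomputable def fracCount (f : V → V → ℝ) : ℕ :=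
  (Finset.univ.filter fun p : V × V => ¬ IsInt (f p.1 p.2)).card

/-- The perturbation lemma. -/
lemma perturb (c : V → V → ℕ) (s t : V) (w : V → V → ℝ) (f : V → V → ℝ)
    (hf : IsFlow c s t f) (d : V → V → ℝ)
    (hsupp : ∀ u v, d u v ≠ 0 → ¬ IsInt (f u v))
    (hdc : ∀ y, y ≠ s → y ≠ t → ∑ u, d u y = ∑ u, d y u)
    (hd0 : ∃ u v, d u v ≠ 0) :
    ∃ ε : ℝ, 0 < ε ∧ IsFlow c s t (fun u v => f u v + ε * d u v) ∧
      flowValue s (fun u v => f u v + ε * d u v)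
        = flowValue s f + ε * ((∑ u, d s u) - (∑ u, d u s)) ∧
      flowCost w (fun u v => f u v + ε * d u v) = flowCost w f + ε * flowCost w d ∧
      fracCount (fun u v => f u v + ε * d u v) < fracCount f := by
  classical
  set S : Finset (V × V) := Finset.univ.filter fun p => d p.1 p.2 ≠ 0 with hSdef
  have hS : S.Nonempty := by
    obtain ⟨u, v, h⟩ := hd0
    exact ⟨(u, v), Finset.mem_filter.mpr ⟨Finset.mem_univ _, h⟩⟩
  set gap : V × V → ℝ := fun p =>
    (if 0 < d p.1 p.2 then (⌈f p.1 p.2⌉ : ℝ) - f p.1 p.2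
      else f p.1 p.2 - (⌊f p.1 p.2⌋ : ℝ)) / |d p.1 p.2| with hgapdef
  have hbounds : ∀ p ∈ S, (⌊f p.1 p.2⌋ : ℝ) < f p.1 p.2 ∧ f p.1 p.2 < (⌈f p.1 p.2⌉ : ℝ) := by
    intro p hp
    have hd : d p.1 p.2 ≠ 0 := (Finset.mem_filter.mp hp).2
    have hfr : ¬ IsInt (f p.1 p.2) := hsupp _ _ hd
    constructor
    · rcases lt_or_eq_of_le (Int.floor_le (f p.1 p.2)) with h | h
      · exact h
      · exact absurd ⟨⌊f p.1 p.2⌋, h.symm⟩ hfr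
    · rcases lt_or_eq_of_le (Int.le_ceil (f p.1 p.2)) with h | h
      · exact h
      · exact absurd ⟨⌈f p.1 p.2⌉, h⟩ hfr
  have hgap_pos : ∀ p ∈ S, 0 < gap p := by
    intro p hp
    have hd : d p.1 p.2 ≠ 0 := (Finset.mem_filter.mp hp).2
    obtain ⟨hl, hh⟩ := hbounds p hp
    apply div_pos _ (abs_pos.mpr hd)
    by_cases h : 0 < d p.1 p.2 <;> simp only [if_pos, if_neg, h, ite_true, ite_false] <;> linarith
  set ε : ℝ := S.inf' hS gap with hεdef
  have hε : 0 < ε := (Finset.lt_inf'_iff hS).mpr hgap_pos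
  have hεle : ∀ p ∈ S, ε ≤ gap p := fun p hp => Finset.inf'_le gap hp
  -- key pointwise bounds
  have hbox : ∀ u v, 0 ≤ f u v + ε * d u v ∧ f u v + ε * d u v ≤ (c u v : ℝ) := by
    intro u v
    by_cases hd : d u v = 0
    · rw [hd]; simpa using hf.1 u v
    · have hpS : (u, v) ∈ S := Finset.mem_filter.mpr ⟨Finset.mem_univ _, hd⟩
      obtain ⟨hl, hh⟩ := hbounds (u, v) hpS
      have hle := hεle (u, v) hpS
      have hcu : (⌈f u v⌉ : ℝ) ≤ (c u v : ℝ) := by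
        have h1 : ⌈f u v⌉ ≤ ((c u v : ℕ) : ℤ) := Int.ceil_le.mpr (by exact_mod_cast (hf.1 u v).2)
        exact_mod_cast h1
      have hfl : (0 : ℝ) ≤ (⌊f u v⌋ : ℝ) := by
        have h1 : (0 : ℤ) ≤ ⌊f u v⌋ := Int.le_floor.mpr (by exact_mod_cast (hf.1 u v).1)
        exact_mod_cast h1
      rcases lt_or_gt_of_ne hd with hneg | hpos
      · -- d < 0
        have habs : |d u v| = -(d u v) := abs_of_neg hneg
        have hgapv : gap (u, v) = (f u v - (⌊f u v⌋ : ℝ)) / (-(d u v)) := by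
          rw [hgapdef]
          simp only [if_neg (show ¬ (0 : ℝ) < d u v by linarith)]
          rw [habs]
        rw [hgapv] at hle
        have h2 : ε * (-(d u v)) ≤ f u v - (⌊f u v⌋ : ℝ) := by
          rw [← le_div_iff₀ (by linarith : (0:ℝ) < -(d u v))]
          exact hle
        constructor
        · nlinarith
        · nlinarith [(hf.1 u v).2, mul_pos hε (by linarith : (0:ℝ) < -(d u v))]
      · -- d > 0
        have habs : |d u v| = d u v := abs_of_pos hpos
        have hgapv : gap (u, v) = ((⌈f u v⌉ : ℝ) - f u v) / d u v := by
          rw [hgapdef]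
          simp only [if_pos hpos]
          rw [habs]
        rw [hgapv] at hle
        have h2 : ε * d u v ≤ (⌈f u v⌉ : ℝ) - f u v := by
          rw [← le_div_iff₀ hpos]
          exact hle
        constructor
        · nlinarith [(hf.1 u v).1, mul_pos hε hpos]
        · nlinarith
  refine ⟨ε, hε, ⟨hbox, ?_⟩, ?_, ?_, ?_⟩
  · -- conservation
    intro v hvs hvt
    rw [Finset.sum_add_distrib, Finset.sum_add_distrib, ← Finset.mul_sum, ← Finset.mul_sum,
      hf.2 v hvs hvt, hdc v hvs hvt]
  · -- value
    simp only [flowValue, Finset.sum_add_distrib, ← Finset.mul_sum]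
    ring
  · -- cost
    have hptw : ∀ u v : V, (f u v + ε * d u v) * w u v
        = f u v * w u v + ε * (d u v * w u v) := by intro u v; ring
    simp only [flowCost, hptw, Finset.sum_add_distrib, ← Finset.mul_sum]
  · -- frac count decreases
    have hsub : (Finset.univ.filter fun p : V × V => ¬ IsInt (f p.1 p.2 + ε * d p.1 p.2))
        ⊆ Finset.univ.filter fun p : V × V => ¬ IsInt (f p.1 p.2) := by
      intro p hp
      rw [Finset.mem_filter] at hp ⊢
      refine ⟨Finset.mem_univ _, ?_⟩
      by_cases hd : d p.1 p.2 = 0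
      · rw [hd] at hp; simpa using hp.2
      · exact hsupp _ _ hd
    obtain ⟨p₀, hp₀S, hp₀eq⟩ := Finset.exists_mem_eq_inf' hS gap
    have hd₀ : d p₀.1 p₀.2 ≠ 0 := (Finset.mem_filter.mp hp₀S).2
    have hp₀int : IsInt (f p₀.1 p₀.2 + ε * d p₀.1 p₀.2) := by
      have hεgap : ε = gap p₀ := hp₀eq
      rcases lt_or_gt_of_ne hd₀ with hneg | hpos
      · refine ⟨⌊f p₀.1 p₀.2⌋, ?_⟩
        have key : (f p₀.1 p₀.2 - (⌊f p₀.1 p₀.2⌋ : ℝ)) / -d p₀.1 p₀.2 * d p₀.1 p₀.2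
            = (⌊f p₀.1 p₀.2⌋ : ℝ) - f p₀.1 p₀.2 := by
          rw [div_mul_eq_mul_div, div_eq_iff (show -d p₀.1 p₀.2 ≠ 0 by
            intro h; exact hd₀ (by linarith))]
          ring
        rw [hεgap]
        simp only [hgapdef, if_neg (show ¬ (0 : ℝ) < d p₀.1 p₀.2 by linarith),
          abs_of_neg hneg]
        rw [key]
        ring
      · refine ⟨⌈f p₀.1 p₀.2⌉, ?_⟩
        have key : ((⌈f p₀.1 p₀.2⌉ : ℝ) - f p₀.1 p₀.2) / d p₀.1 p₀.2 * d p₀.1 p₀.2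
            = (⌈f p₀.1 p₀.2⌉ : ℝ) - f p₀.1 p₀.2 := div_mul_cancel₀ _ (ne_of_gt hpos)
        rw [hεgap]
        simp only [hgapdef, if_pos hpos, abs_of_pos hpos]
        rw [key]
        ring
    have hssub : (Finset.univ.filter fun p : V × V => ¬ IsInt (f p.1 p.2 + ε * d p.1 p.2))
        ⊂ Finset.univ.filter fun p : V × V => ¬ IsInt (f p.1 p.2) := by
      refine Finset.ssubset_iff_of_subset hsub |>.mpr ?_
      refine ⟨p₀, Finset.mem_filter.mpr ⟨Finset.mem_univ _, hsupp _ _ hd₀⟩, ?_⟩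
      rw [Finset.mem_filter]
      push_neg
      intro _
      exact hp₀int
    simpa [fracCount] using Finset.card_lt_card hssub

lemma continuous_flowValue (s : V) : Continuous fun f : V → V → ℝ => flowValue s f := by
  apply Continuous.sub
  · exact continuous_finset_sum _ fun u _ => (continuous_apply u).comp (continuous_apply s)
  · exact continuous_finset_sum _ fun u _ => (continuous_apply s).comp (continuous_apply u)

lemma continuous_flowCost (w : V → V → ℝ) :
    Continuous fun f : V → V → ℝ => flowCost w f := by
  apply continuous_finset_sum
  intro u _
  apply continuous_finset_sum
  intro v _
  exact (show Continuous fun f : V → V → ℝ => f u v from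
    (continuous_apply v).comp (continuous_apply u)).mul continuous_const

lemma isClosed_flows (c : V → V → ℕ) (s t : V) :
    IsClosed {f : V → V → ℝ | IsFlow c s t f} := by
  have heq : {f : V → V → ℝ | IsFlow c s t f} =
      (⋂ u, ⋂ v, ({f : V → V → ℝ | 0 ≤ f u v} ∩ {f | f u v ≤ (c u v : ℝ)})) ∩
      ⋂ v, ⋂ (_ : v ≠ s), ⋂ (_ : v ≠ t), {f : V → V → ℝ | ∑ u, f u v = ∑ u, f v u} := by
    ext f
    simp only [IsFlow, Set.mem_setOf_eq, Set.mem_inter_iff, Set.mem_iInter,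
      Set.mem_inter_iff, Set.mem_setOf_eq]
  rw [heq]
  apply IsClosed.inter
  · refine isClosed_iInter fun u => isClosed_iInter fun v => IsClosed.inter ?_ ?_
    · exact isClosed_le continuous_const ((continuous_apply v).comp (continuous_apply u))
    · exact isClosed_le ((continuous_apply v).comp (continuous_apply u)) continuous_const
  · refine isClosed_iInter fun v => isClosed_iInter fun _ => isClosed_iInter fun _ => ?_
    exact isClosed_eq
      (continuous_finset_sum _ fun u _ => (continuous_apply v).comp (continuous_apply u))
      (continuous_finset_sum _ fun u _ => (continuous_apply u).comp (continuous_apply v))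

lemma isCompact_flows (c : V → V → ℕ) (s t : V) :
    IsCompact {f : V → V → ℝ | IsFlow c s t f} := by
  have hcomp : IsCompact (Set.pi Set.univ fun u : V =>
      Set.pi Set.univ fun v : V => Set.Icc (0 : ℝ) (c u v)) :=
    isCompact_univ_pi fun u => isCompact_univ_pi fun v => isCompact_Icc
  refine IsCompact.of_isClosed_subset hcomp (isClosed_flows c s t) ?_
  intro f hf u _ v _
  exact ⟨(hf.1 u v).1, (hf.1 u v).2⟩

lemma zero_isFlow (c : V → V → ℕ) (s t : V) : IsFlow c s t (fun _ _ => 0) :=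
  ⟨fun u v => ⟨le_refl _, by positivity⟩, fun _ _ _ => rfl⟩

end IntegralFlowAux

open IntegralFlowAux in
/-- In a flow network with integer capacities, there is a minimum-cost
maximum flow that is integral. -/
theorem exists_integral_minCost_maxFlow
    (c : V → V → ℕ) (w : V → V → ℝ) (s t : V) :
    ∃ f : V → V → ℝ, IsFlow c s t f ∧
      (∀ g, IsFlow c s t g → flowValue s g ≤ flowValue s f) ∧
      (∀ g, IsFlow c s t g →
        (∀ g', IsFlow c s t g' → flowValue s g' ≤ flowValue s g) →
        flowCost w f ≤ flowCost w g) ∧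
      (∀ u v, ∃ z : ℤ, f u v = (z : ℝ)) := by
  classical
  set K : Set (V → V → ℝ) := {f | IsFlow c s t f} with hKdef
  have hKne : K.Nonempty := ⟨fun _ _ => 0, zero_isFlow c s t⟩
  have hKc : IsCompact K := isCompact_flows c s t
  obtain ⟨f₀, hf₀K, hf₀max⟩ := hKc.exists_isMaxOn hKne (continuous_flowValue s).continuousOn
  set M : ℝ := flowValue s f₀ with hMdef
  have hmax_val : ∀ g, IsFlow c s t g → flowValue s g ≤ M := fun g hg =>
    isMaxOn_iff.mp hf₀max g hg
  set K1 : Set (V → V → ℝ) := K ∩ {g | flowValue s g = M} with hK1def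
  have hK1c : IsCompact K1 :=
    hKc.inter_right (isClosed_singleton.preimage (continuous_flowValue s))
  have hK1ne : K1.Nonempty := ⟨f₀, hf₀K, rfl⟩
  obtain ⟨f₁, hf₁K1, hf₁min⟩ := hK1c.exists_isMinOn hK1ne (continuous_flowCost w).continuousOn
  have hmin_cost : ∀ g, IsFlow c s t g → flowValue s g = M → flowCost w f₁ ≤ flowCost w g :=
    fun g hg hval => isMinOn_iff.mp hf₁min g ⟨hg, hval⟩
  set K2 : Set (V → V → ℝ) := K1 ∩ {g | flowCost w g = flowCost w f₁} with hK2def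
  have hK2ne : K2.Nonempty := ⟨f₁, hf₁K1, rfl⟩
  set Scount : Set ℕ := fracCount '' K2 with hScountdef
  have hSne : Scount.Nonempty := hK2ne.image _
  obtain ⟨fs, hfsK2, hfscount⟩ := Nat.sInf_mem hSne
  have hfsFlow : IsFlow c s t fs := hfsK2.1.1
  have hfsVal : flowValue s fs = M := hfsK2.1.2
  have hfsCost : flowCost w fs = flowCost w f₁ := hfsK2.2
  refine ⟨fs, hfsFlow, ?_, ?_, ?_⟩
  · intro g hg
    rw [hfsVal]
    exact hmax_val g hg
  · intro g hg hgmax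
    have hgval : flowValue s g = M :=
      le_antisymm (hmax_val g hg) (hgmax f₀ hf₀K)
    rw [hfsCost]
    exact hmin_cost g hg hgval
  · -- integrality
    by_contra hcon
    push_neg at hcon
    obtain ⟨a, b, hab⟩ := hcon
    have hab' : Frk fs a b := fun ⟨z, hz⟩ => hab z hz
    obtain ⟨d, hd0, hdsupp, hdc⟩ := core fs s t hfsFlow.2 hab'
    set A : ℝ := (∑ u, d s u) - (∑ u, d u s) with hAdef
    obtain ⟨ε₁, hε₁, hflow₁, hval₁, hcost₁, hcount₁⟩ :=
      perturb c s t w fs hfsFlow d hdsupp hdc hd0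
    have hd0' : ∃ u v, -(d u v) ≠ 0 := by
      obtain ⟨u, v, h⟩ := hd0
      exact ⟨u, v, neg_ne_zero.mpr h⟩
    have hdsupp' : ∀ u v, -(d u v) ≠ 0 → ¬ IsInt (fs u v) := fun u v h =>
      hdsupp u v (fun h2 => h (by rw [h2, neg_zero]))
    have hdc' : ∀ y, y ≠ s → y ≠ t →
        ∑ u, -(d u y) = ∑ u, -(d y u) := by
      intro y hys hyt
      rw [Finset.sum_neg_distrib, Finset.sum_neg_distrib, hdc y hys hyt]
    obtain ⟨ε₂, hε₂, hflow₂, hval₂, hcost₂, hcount₂⟩ :=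
      perturb c s t w fs hfsFlow (fun u v => -(d u v)) hdsupp' hdc' hd0'
    have hval₂' : flowValue s (fun u v => fs u v + ε₂ * -(d u v))
        = flowValue s fs + ε₂ * (-A) := by
      rw [hval₂]
      congr 1
      rw [hAdef]
      rw [Finset.sum_neg_distrib, Finset.sum_neg_distrib]
      ring
    by_cases hA : A = 0
    · -- cost argument
      have hvg₁ : flowValue s (fun u v => fs u v + ε₁ * d u v) = M := by
        rw [hval₁, ← hAdef, hA, hfsVal]; ring
      have hvg₂ : flowValue s (fun u v => fs u v + ε₂ * -(d u v)) = M := by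
        rw [hval₂', hA, hfsVal]; ring
      have hcostneg : flowCost w (fun u v => -(d u v)) = -(flowCost w d) := by
        simp only [flowCost, neg_mul, Finset.sum_neg_distrib]
      have hc₁ : flowCost w f₁ ≤ flowCost w fs + ε₁ * flowCost w d := by
        rw [← hcost₁]
        exact hmin_cost _ hflow₁ hvg₁
      have hc₂ : flowCost w f₁ ≤ flowCost w fs - ε₂ * flowCost w d := by
        have := hmin_cost _ hflow₂ hvg₂
        rw [hcost₂, hcostneg] at this
        linarith
      have hC : flowCost w d = 0 := by
        rw [hfsCost] at hc₁ hc₂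
        nlinarith
      have hg₁K2 : (fun u v => fs u v + ε₁ * d u v) ∈ K2 := by
        refine ⟨⟨hflow₁, hvg₁⟩, ?_⟩
        show flowCost w _ = flowCost w f₁
        rw [hcost₁, hC, hfsCost]; ring
      have hle : sInf Scount ≤ fracCount (fun u v => fs u v + ε₁ * d u v) :=
        Nat.sInf_le ⟨_, hg₁K2, rfl⟩
      rw [hfscount] at hcount₁
      omega
    · -- value argument
      rcases lt_or_gt_of_ne hA with hAneg | hApos
      · have := hmax_val _ hflow₂
        rw [hval₂', hfsVal] at this
        nlinarith
      · have := hmax_val _ hflow₁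
        rw [hval₁, ← hAdef, hfsVal] at this
        nlinarith
end

section
/- Lindström–Gessel–Viennot type identity for the controllability matrix: let A = (a_{ij}) and B = (b_{ij}) be matrices of indeterminates (entries in a commutative ring, with some entries possibly zero). For index sets I ⊆ [n] of rows and J a set of columns of C_l(A,B) with |I| = |J|, det C_l(I,J) = ∑_L sign(L) w(L), where the sum ranges over all vertex-disjoint path families (linkings) L in the dynamic graph D_l(A,B) from the column-vertices J to the row-vertices I, w(L) is the product of edge weights along all paths of L, and sign(L) is the sign of the induced permutation between ordered tails and heads. -/
open Finset

/-- The `k`-step controllability matrix over a commutative ring `R`. -/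
def ctrlMatR (R : Type*) [CommRing R] {n m : ℕ}
    (A : Matrix (Fin n) (Fin n) R) (B : Matrix (Fin n) (Fin m) R) (k : ℕ) :
    Matrix (Fin n) (Fin k × Fin m) R :=
  fun i jc => (A ^ (jc.1 : ℕ) * B) i jc.2

/-- The weight of the path `u_j^κ → x_{σ κ}^κ → x_{σ(κ-1)}^{κ-1} → ⋯ → x_{σ 0}^0`
in the dynamic graph `D_l(A,B)`: the product of its edge weights. -/
def pathWeight {R : Type*} [CommRing R] {n m : ℕ}
    (A : Matrix (Fin n) (Fin n) R) (B : Matrix (Fin n) (Fin m) R)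
    (σ : ℕ → Fin n) (κ : ℕ) (j : Fin m) : R :=
  B (σ κ) j * ∏ t ∈ Finset.range κ, A (σ t) (σ (t + 1))

/-- `x = (π, σ)` is a `(J,I)`-linking in the dynamic graph `D_l(A,B)`: a family of
pairwise vertex-disjoint paths, the `a`-th going from the input vertex of column
`Jf (π a)` down to the first-layer state vertex `If a` (the path for column
`(κ, j)` visits state `σ a t` at layer `t` for `t ≤ κ`; values beyond layer `κ`
are frozen so that the representation is unique). -/
def IsLinking {n m l r : ℕ} (If : Fin r → Fin n) (Jf : Fin r → Fin l × Fin m)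
    (x : Equiv.Perm (Fin r) × (Fin r → ℕ → Fin n)) : Prop :=
  (∀ a, x.2 a 0 = If a) ∧
  (∀ a t, ((Jf (x.1 a)).1 : ℕ) ≤ t → x.2 a t = x.2 a ((Jf (x.1 a)).1 : ℕ)) ∧
  (∀ a b, a ≠ b → ∀ t, t ≤ ((Jf (x.1 a)).1 : ℕ) → t ≤ ((Jf (x.1 b)).1 : ℕ) →
    x.2 a t ≠ x.2 b t)

namespace LGVAux

variable {R : Type*} [CommRing R] {n m l r : ℕ}

/-- Extend a finite path to `ℕ → Fin n`, frozen after `κ`. -/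
def ext {n : ℕ} (i : Fin n) (κ : ℕ) (f : Fin κ → Fin n) : ℕ → Fin n :=
  fun t => (Fin.cons i f : Fin (κ + 1) → Fin n)
    ⟨min t κ, Nat.lt_succ_of_le (Nat.min_le_right t κ)⟩

lemma ext_zero (i : Fin n) (κ : ℕ) (f : Fin κ → Fin n) : ext i κ f 0 = i := by
  unfold ext
  have : (⟨min 0 κ, by omega⟩ : Fin (κ + 1)) = 0 := by ext; simp
  rw [this, Fin.cons_zero]

lemma ext_frozen (i : Fin n) (κ : ℕ) (f : Fin κ → Fin n) {t : ℕ} (ht : κ ≤ t) :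
    ext i κ f t = ext i κ f κ := by
  unfold ext
  congr 1
  ext
  simp
  omega

lemma ext_succ (i : Fin n) (κ : ℕ) (f : Fin κ → Fin n) {s : ℕ} (hs : s < κ) :
    ext i κ f (s + 1) = f ⟨s, hs⟩ := by
  unfold ext
  have : (⟨min (s + 1) κ, Nat.lt_succ_of_le (Nat.min_le_right _ κ)⟩ : Fin (κ + 1))
      = Fin.succ ⟨s, hs⟩ := by
    ext; simp; omega
  rw [this, Fin.cons_succ]

lemma ext_cons_succ (i i' : Fin n) (κ : ℕ) (g : Fin κ → Fin n) (t : ℕ) :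
    ext i (κ + 1) (Fin.cons i' g) (t + 1) = ext i' κ g t := by
  unfold ext
  have h1 : (⟨min (t + 1) (κ + 1), Nat.lt_succ_of_le (Nat.min_le_right _ _)⟩ : Fin (κ + 2)) =
      Fin.succ ⟨min t κ, Nat.lt_succ_of_le (Nat.min_le_right t κ)⟩ := by ext; simp
  rw [h1, Fin.cons_succ]

lemma pathWeight_ext_cons (A : Matrix (Fin n) (Fin n) R) (B : Matrix (Fin n) (Fin m) R)
    (κ : ℕ) (i i' : Fin n) (g : Fin κ → Fin n) (j : Fin m) :
    pathWeight A B (ext i (κ + 1) (Fin.cons i' g)) (κ + 1) j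
      = A i i' * pathWeight A B (ext i' κ g) κ j := by
  unfold pathWeight
  rw [Finset.prod_range_succ']
  simp only [ext_cons_succ, ext_zero]
  ring

lemma pow_mul_apply (A : Matrix (Fin n) (Fin n) R) (B : Matrix (Fin n) (Fin m) R) :
    ∀ (κ : ℕ) (i : Fin n) (j : Fin m),
      (A ^ κ * B) i j = ∑ f : Fin κ → Fin n, pathWeight A B (ext i κ f) κ j := by
  intro κ
  induction κ with
  | zero =>
    intro i j
    rw [pow_zero, Matrix.one_mul]
    rw [Fintype.sum_unique]
    simp [pathWeight, ext_zero]
  | succ κ ih =>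
    intro i j
    rw [pow_succ', Matrix.mul_assoc, Matrix.mul_apply]
    have h1 : ∀ i', A i i' * (A ^ κ * B) i' j
        = ∑ g : Fin κ → Fin n, A i i' * pathWeight A B (ext i' κ g) κ j := by
      intro i'; rw [ih, Finset.mul_sum]
    rw [Finset.sum_congr rfl fun i' _ => h1 i']
    rw [← Equiv.sum_comp (Fin.consEquiv (fun _ : Fin (κ + 1) => Fin n))
      (fun f => pathWeight A B (ext i (κ + 1) f) (κ + 1) j)]
    rw [Fintype.sum_prod_type]
    refine Finset.sum_congr rfl fun i' _ => Finset.sum_congr rfl fun g _ => ?_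
    have : (Fin.consEquiv (fun _ : Fin (κ + 1) => Fin n)) (i', g) = Fin.cons i' g := rfl
    rw [this, pathWeight_ext_cons]

/-! ### Families of paths -/

/-- A family: a permutation together with one (frozen) path per index. -/
abbrev Fam (n r : ℕ) := Equiv.Perm (Fin r) × (Fin r → ℕ → Fin n)

/-- The length of the path assigned to index `a`. -/
def kap (Jf : Fin r → Fin l × Fin m) (x : Fam n r) (a : Fin r) : ℕ := ((Jf (x.1 a)).1 : ℕ)

/-- Admissible family: correct endpoints and frozen representation. -/
def Adm (If : Fin r → Fin n) (Jf : Fin r → Fin l × Fin m) (x : Fam n r) : Prop :=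
  (∀ a, x.2 a 0 = If a) ∧ (∀ a t, kap Jf x a ≤ t → x.2 a t = x.2 a (kap Jf x a))

/-- Collision of paths `a` and `b` at time `t`. -/
def Col (Jf : Fin r → Fin l × Fin m) (x : Fam n r) (a b : Fin r) (t : ℕ) : Prop :=
  a ≠ b ∧ t ≤ kap Jf x a ∧ t ≤ kap Jf x b ∧ x.2 a t = x.2 b t

/-- The signed weight of a family. -/
def wgt (A : Matrix (Fin n) (Fin n) R) (B : Matrix (Fin n) (Fin m) R)
    (Jf : Fin r → Fin l × Fin m) (x : Fam n r) : R :=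
  ((Equiv.Perm.sign x.1 : ℤ) : R) * ∏ a, pathWeight A B (x.2 a) (kap Jf x a) ((Jf (x.1 a)).2)

lemma isLinking_iff (If : Fin r → Fin n) (Jf : Fin r → Fin l × Fin m) (x : Fam n r) :
    IsLinking If Jf x ↔ Adm If Jf x ∧ ∀ a b t, ¬ Col Jf x a b t := by
  constructor
  · rintro ⟨h1, h2, h3⟩
    exact ⟨⟨h1, h2⟩, fun a b t ⟨hab, ha, hb, he⟩ => h3 a b hab t ha hb he⟩
  · rintro ⟨⟨h1, h2⟩, h3⟩
    exact ⟨h1, h2, fun a b hab t ha hb he => h3 a b t ⟨hab, ha, hb, he⟩⟩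

lemma adm_finite (If : Fin r → Fin n) (Jf : Fin r → Fin l × Fin m) :
    {x : Fam n r | Adm If Jf x}.Finite := by
  apply Set.Finite.of_finite_image (f := fun x : Fam n r =>
    (x.1, fun a (t : Fin (l + 1)) => x.2 a (t : ℕ)))
    (Set.toFinite _)
  rintro x hx y hy hxy
  replace hxy : (x.1, fun a (t : Fin (l + 1)) => x.2 a (t : ℕ))
      = (y.1, fun a (t : Fin (l + 1)) => y.2 a (t : ℕ)) := hxy
  have h1 : x.1 = y.1 := (Prod.ext_iff.1 hxy).1
  have h2 : ∀ a (t : Fin (l + 1)), x.2 a (t : ℕ) = y.2 a (t : ℕ) := by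
    intro a t
    exact congrFun (congrFun (Prod.ext_iff.1 hxy).2 a) t
  have hk : ∀ a, kap Jf x a = kap Jf y a := fun a => by unfold kap; rw [h1]
  have hkl : ∀ a, kap Jf x a < l := fun a => (Jf (x.1 a)).1.isLt
  refine Prod.ext h1 (funext fun a => funext fun t => ?_)
  by_cases ht : t ≤ l
  · exact h2 a ⟨t, by omega⟩
  · have hx2 := hx.2 a t (by have := hkl a; omega)
    have hy2 := hy.2 a t (by rw [← hk a]; have := hkl a; omega)
    rw [hx2, hy2, ← hk a]
    exact h2 a ⟨kap Jf x a, by have := hkl a; omega⟩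

lemma stepA (A : Matrix (Fin n) (Fin n) R) (B : Matrix (Fin n) (Fin m) R)
    (If : Fin r → Fin n) (Jf : Fin r → Fin l × Fin m) :
    ((ctrlMatR R A B l).submatrix If Jf).det
      = ∑ x ∈ (adm_finite If Jf).toFinset, wgt A B Jf x := by
  classical
  rw [← Matrix.det_transpose, Matrix.det_apply']
  simp only [Matrix.transpose_apply, Matrix.submatrix_apply, ctrlMatR]
  have key : ∀ σ : Equiv.Perm (Fin r),
      ∏ a, (A ^ ((Jf (σ a)).1 : ℕ) * B) (If a) (Jf (σ a)).2
        = ∑ g : (∀ a : Fin r, Fin ((Jf (σ a)).1 : ℕ) → Fin n),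
            ∏ a, pathWeight A B (ext (If a) ((Jf (σ a)).1 : ℕ) (g a))
              ((Jf (σ a)).1 : ℕ) (Jf (σ a)).2 := by
    intro σ
    rw [Finset.prod_congr rfl fun a _ => pow_mul_apply A B ((Jf (σ a)).1 : ℕ) (If a) (Jf (σ a)).2]
    exact Fintype.prod_sum _
  simp only [key, Finset.mul_sum]
  rw [Finset.sum_sigma']
  refine Finset.sum_nbij'
    (i := fun p : (Σ σ : Equiv.Perm (Fin r), ∀ a : Fin r, Fin ((Jf (σ a)).1 : ℕ) → Fin n) =>
      ((p.1, fun a => ext (If a) ((Jf (p.1 a)).1 : ℕ) (p.2 a)) : Fam n r))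
    (j := fun x : Fam n r =>
      (⟨x.1, fun a s => x.2 a ((s : ℕ) + 1)⟩ :
        Σ σ : Equiv.Perm (Fin r), ∀ a : Fin r, Fin ((Jf (σ a)).1 : ℕ) → Fin n))
    ?_ ?_ ?_ ?_ ?_
  · rintro ⟨σ, g⟩ -
    rw [Set.Finite.mem_toFinset]
    constructor
    · intro a; exact (ext_zero (If a) ((Jf (σ a)).1 : ℕ) (g a) :)
    · intro a t h
      exact (ext_frozen _ _ _ h).trans rfl
  · rintro x hx
    exact Finset.mem_sigma.2 ⟨Finset.mem_univ _, Finset.mem_univ _⟩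
  · rintro ⟨σ, g⟩ -
    refine congrArg (Sigma.mk σ) (funext fun a => funext fun s => ?_)
    simp only
    rw [ext_succ (If a) _ (g a) s.isLt]
  · rintro x hx
    rw [Set.Finite.mem_toFinset] at hx
    obtain ⟨hx1, hx2⟩ := hx
    simp only [kap] at hx2
    refine Prod.ext rfl (funext fun a => funext fun t => ?_)
    simp only
    have haux : ∀ t ≤ ((Jf (x.1 a)).1 : ℕ),
        ext (If a) ((Jf (x.1 a)).1 : ℕ) (fun s => x.2 a ((s : ℕ) + 1)) t = x.2 a t := by
      intro t ht
      match t with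
      | 0 => rw [ext_zero, hx1 a]
      | s + 1 => rw [ext_succ _ _ _ (by omega : s < ((Jf (x.1 a)).1 : ℕ))]
    by_cases ht : t ≤ ((Jf (x.1 a)).1 : ℕ)
    · exact haux t ht
    · rw [ext_frozen _ _ _ (by omega), haux _ le_rfl, hx2 a t (by omega)]
  · rintro ⟨σ, g⟩ -
    rfl

/-! ### Splicing paths -/

/-- Follow `σ` up to time `t`, then `τ`. -/
def splice {n : ℕ} (σ τ : ℕ → Fin n) (t : ℕ) : ℕ → Fin n := fun s => if s ≤ t then σ s else τ s

lemma splice_le {σ τ : ℕ → Fin n} {t s : ℕ} (hs : s ≤ t) : splice σ τ t s = σ s := if_pos hs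

lemma splice_gt {σ τ : ℕ → Fin n} {t s : ℕ} (hs : t < s) : splice σ τ t s = τ s :=
  if_neg (by omega)

lemma splice_ge {σ τ : ℕ → Fin n} {t s : ℕ} (hst : σ t = τ t) (hs : t ≤ s) :
    splice σ τ t s = τ s := by
  rcases eq_or_lt_of_le hs with h | h
  · subst h; rw [splice_le le_rfl, hst]
  · exact splice_gt h

lemma splice_self (σ : ℕ → Fin n) (t : ℕ) : splice σ σ t = σ := by
  funext s; unfold splice; split_ifs <;> rfl

lemma pathWeight_splice (A : Matrix (Fin n) (Fin n) R) (B : Matrix (Fin n) (Fin m) R)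
    (σ τ : ℕ → Fin n) {t κ : ℕ} (ht : t ≤ κ) (hst : σ t = τ t) (j : Fin m) :
    pathWeight A B (splice σ τ t) κ j
      = (∏ s ∈ Finset.range t, A (σ s) (σ (s + 1)))
        * (B (τ κ) j * ∏ s ∈ Finset.Ico t κ, A (τ s) (τ (s + 1))) := by
  unfold pathWeight
  have hκ : splice σ τ t κ = τ κ := splice_ge hst ht
  rw [hκ]
  have hsplit : ∏ s ∈ Finset.range κ, A (splice σ τ t s) (splice σ τ t (s + 1))
      = (∏ s ∈ Finset.Ico 0 t, A (splice σ τ t s) (splice σ τ t (s + 1)))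
        * ∏ s ∈ Finset.Ico t κ, A (splice σ τ t s) (splice σ τ t (s + 1)) := by
    rw [Finset.prod_Ico_consecutive _ (Nat.zero_le t) ht, Finset.range_eq_Ico]
  rw [hsplit]
  have h1 : ∏ s ∈ Finset.Ico 0 t, A (splice σ τ t s) (splice σ τ t (s + 1))
      = ∏ s ∈ Finset.range t, A (σ s) (σ (s + 1)) := by
    rw [← Finset.range_eq_Ico]
    refine Finset.prod_congr rfl fun s hs => ?_
    rw [Finset.mem_range] at hs
    rw [splice_le (by omega), splice_le (by omega)]
  have h2 : ∏ s ∈ Finset.Ico t κ, A (splice σ τ t s) (splice σ τ t (s + 1))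
      = ∏ s ∈ Finset.Ico t κ, A (τ s) (τ (s + 1)) := by
    refine Finset.prod_congr rfl fun s hs => ?_
    rw [Finset.mem_Ico] at hs
    rw [splice_ge hst (by omega), splice_gt (by omega)]
  rw [h1, h2]
  ring

lemma pathWeight_split (A : Matrix (Fin n) (Fin n) R) (B : Matrix (Fin n) (Fin m) R)
    (σ : ℕ → Fin n) {t κ : ℕ} (ht : t ≤ κ) (j : Fin m) :
    pathWeight A B σ κ j
      = (∏ s ∈ Finset.range t, A (σ s) (σ (s + 1)))
        * (B (σ κ) j * ∏ s ∈ Finset.Ico t κ, A (σ s) (σ (s + 1))) := by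
  conv_lhs => rw [← splice_self σ t]
  exact pathWeight_splice A B σ σ ht rfl j

lemma pathWeight_swap_pair (A : Matrix (Fin n) (Fin n) R) (B : Matrix (Fin n) (Fin m) R)
    (σa σb : ℕ → Fin n) {t κa κb : ℕ} (hta : t ≤ κa) (htb : t ≤ κb)
    (hst : σa t = σb t) (ja jb : Fin m) :
    pathWeight A B (splice σa σb t) κb jb * pathWeight A B (splice σb σa t) κa ja
      = pathWeight A B σa κa ja * pathWeight A B σb κb jb := by
  rw [pathWeight_splice A B σa σb htb hst, pathWeight_splice A B σb σa hta hst.symm,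
    pathWeight_split A B σa hta, pathWeight_split A B σb htb]
  ring

/-! ### The canonical swap -/

/-- Swap the tails (above time `t`) of paths `a` and `b`. -/
def swapAt (x : Fam n r) (a b : Fin r) (t : ℕ) : Fam n r :=
  (x.1 * Equiv.swap a b,
    fun c => if c = a then splice (x.2 a) (x.2 b) t
      else if c = b then splice (x.2 b) (x.2 a) t else x.2 c)

section swapAt

variable {Jf : Fin r → Fin l × Fin m} {If : Fin r → Fin n} {x : Fam n r}
  {a b : Fin r} {t : ℕ}

lemma swapAt_fst (c : Fin r) : (swapAt x a b t).1 c = x.1 (Equiv.swap a b c) := rfl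

lemma swapAt_kap_a : kap Jf (swapAt x a b t) a = kap Jf x b := by
  unfold kap; rw [swapAt_fst, Equiv.swap_apply_left]

lemma swapAt_kap_b : kap Jf (swapAt x a b t) b = kap Jf x a := by
  unfold kap; rw [swapAt_fst, Equiv.swap_apply_right]

lemma swapAt_kap_other {c : Fin r} (hca : c ≠ a) (hcb : c ≠ b) :
    kap Jf (swapAt x a b t) c = kap Jf x c := by
  unfold kap; rw [swapAt_fst, Equiv.swap_apply_of_ne_of_ne hca hcb]

lemma swapAt_snd_a : (swapAt x a b t).2 a = splice (x.2 a) (x.2 b) t := if_pos rfl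

lemma swapAt_snd_b (hab : a ≠ b) : (swapAt x a b t).2 b = splice (x.2 b) (x.2 a) t := by
  show (if b = a then _ else if b = b then _ else _) = _
  rw [if_neg hab.symm, if_pos rfl]

lemma swapAt_snd_other {c : Fin r} (hca : c ≠ a) (hcb : c ≠ b) :
    (swapAt x a b t).2 c = x.2 c := by
  show (if c = a then _ else if c = b then _ else _) = _
  rw [if_neg hca, if_neg hcb]

variable (hcol : Col Jf x a b t)

lemma swapAt_adm (hx : Adm If Jf x) (hcol : Col Jf x a b t) :
    Adm If Jf (swapAt x a b t) := by
  obtain ⟨hab, hta, htb, hst⟩ := hcol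
  constructor
  · intro c
    by_cases hca : c = a
    · subst hca; rw [swapAt_snd_a, splice_le (Nat.zero_le t)]; exact hx.1 c
    by_cases hcb : c = b
    · subst hcb; rw [swapAt_snd_b hab, splice_le (Nat.zero_le t)]; exact hx.1 c
    · rw [swapAt_snd_other hca hcb]; exact hx.1 c
  · intro c s hs
    by_cases hca : c = a
    · subst hca
      rw [swapAt_kap_a] at hs ⊢
      rw [swapAt_snd_a, splice_ge hst (le_trans htb hs), splice_ge hst htb,
        hx.2 b s hs]
    by_cases hcb : c = b
    · subst hcb
      rw [swapAt_kap_b] at hs ⊢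
      rw [swapAt_snd_b hab, splice_ge hst.symm (le_trans hta hs), splice_ge hst.symm hta,
        hx.2 a s hs]
    · rw [swapAt_kap_other hca hcb] at hs ⊢
      rw [swapAt_snd_other hca hcb]
      exact hx.2 c s hs

lemma swapAt_col (hcol : Col Jf x a b t) : Col Jf (swapAt x a b t) a b t := by
  obtain ⟨hab, hta, htb, hst⟩ := hcol
  refine ⟨hab, ?_, ?_, ?_⟩
  · rw [swapAt_kap_a]; exact htb
  · rw [swapAt_kap_b]; exact hta
  · rw [swapAt_snd_a, swapAt_snd_b hab, splice_le le_rfl, splice_le le_rfl]; exact hst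

lemma swapAt_swapAt (hab : a ≠ b) : swapAt (swapAt x a b t) a b t = x := by
  refine Prod.ext ?_ ?_
  · show x.1 * Equiv.swap a b * Equiv.swap a b = x.1
    rw [mul_assoc, Equiv.swap_mul_self, mul_one]
  · funext c
    by_cases hca : c = a
    · show (swapAt (swapAt x a b t) a b t).2 c = x.2 c
      rw [hca, swapAt_snd_a]
      funext s
      by_cases hs : s ≤ t
      · rw [splice_le hs, swapAt_snd_a, splice_le hs]
      · rw [splice_gt (by omega), swapAt_snd_b hab, splice_gt (by omega)]
    by_cases hcb : c = b
    · show (swapAt (swapAt x a b t) a b t).2 c = x.2 c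
      rw [hcb, swapAt_snd_b hab]
      funext s
      by_cases hs : s ≤ t
      · rw [splice_le hs, swapAt_snd_b hab, splice_le hs]
      · rw [splice_gt (by omega), swapAt_snd_a, splice_gt (by omega)]
    · show (swapAt (swapAt x a b t) a b t).2 c = x.2 c
      rw [swapAt_snd_other hca hcb, swapAt_snd_other hca hcb]

lemma swapAt_fst_ne (hab : a ≠ b) : (swapAt x a b t).1 ≠ x.1 := by
  intro heq
  have h1 : x.1 * Equiv.swap a b = x.1 * 1 := by
    rw [mul_one]; exact heq
  have h2 : Equiv.swap a b = 1 := mul_left_cancel h1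
  have h3 : Equiv.swap a b a = a := by rw [h2]; rfl
  rw [Equiv.swap_apply_left] at h3
  exact hab h3.symm

lemma swapAt_wgt (A : Matrix (Fin n) (Fin n) R) (B : Matrix (Fin n) (Fin m) R)
    (hcol : Col Jf x a b t) :
    wgt A B Jf (swapAt x a b t) = - wgt A B Jf x := by
  obtain ⟨hab, hta, htb, hst⟩ := hcol
  unfold wgt
  have hsgn : Equiv.Perm.sign (swapAt x a b t).1 = - Equiv.Perm.sign x.1 := by
    show Equiv.Perm.sign (x.1 * Equiv.swap a b) = _
    rw [Equiv.Perm.sign_mul, Equiv.Perm.sign_swap hab, mul_neg_one]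
  have hprod :
      ∏ c, pathWeight A B ((swapAt x a b t).2 c) (kap Jf (swapAt x a b t) c)
          ((Jf ((swapAt x a b t).1 c)).2)
        = ∏ c, pathWeight A B (x.2 c) (kap Jf x c) ((Jf (x.1 c)).2) := by
    have hbmem : b ∈ Finset.univ.erase a := Finset.mem_erase.2 ⟨hab.symm, Finset.mem_univ b⟩
    rw [← Finset.mul_prod_erase Finset.univ _ (Finset.mem_univ a),
      ← Finset.mul_prod_erase _ _ hbmem,
      ← Finset.mul_prod_erase Finset.univ
        (fun c => pathWeight A B (x.2 c) (kap Jf x c) ((Jf (x.1 c)).2)) (Finset.mem_univ a),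
      ← Finset.mul_prod_erase _ _ hbmem, ← mul_assoc, ← mul_assoc]
    have hrest : ∏ c ∈ (Finset.univ.erase a).erase b,
        pathWeight A B ((swapAt x a b t).2 c) (kap Jf (swapAt x a b t) c)
          ((Jf ((swapAt x a b t).1 c)).2)
        = ∏ c ∈ (Finset.univ.erase a).erase b,
            pathWeight A B (x.2 c) (kap Jf x c) ((Jf (x.1 c)).2) := by
      refine Finset.prod_congr rfl fun c hc => ?_
      have hcb : c ≠ b := (Finset.mem_erase.1 hc).1
      have hca : c ≠ a := (Finset.mem_erase.1 (Finset.mem_erase.1 hc).2).1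
      rw [swapAt_snd_other hca hcb, swapAt_kap_other hca hcb, swapAt_fst,
        Equiv.swap_apply_of_ne_of_ne hca hcb]
    rw [hrest]
    congr 1
    have hja : (Jf ((swapAt x a b t).1 a)).2 = (Jf (x.1 b)).2 := by
      rw [swapAt_fst, Equiv.swap_apply_left]
    have hjb : (Jf ((swapAt x a b t).1 b)).2 = (Jf (x.1 a)).2 := by
      rw [swapAt_fst, Equiv.swap_apply_right]
    rw [swapAt_snd_a, swapAt_snd_b hab, swapAt_kap_a, swapAt_kap_b, hja, hjb]
    rw [pathWeight_swap_pair A B (x.2 a) (x.2 b) hta htb hst]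
  rw [hsgn, hprod]
  push_cast
  ring

end swapAt

/-! ### Canonical collision and the involution -/

lemma Col.symm {Jf : Fin r → Fin l × Fin m} {x : Fam n r} {a b : Fin r} {t : ℕ}
    (h : Col Jf x a b t) : Col Jf x b a t :=
  ⟨h.1.symm, h.2.2.1, h.2.1, h.2.2.2.symm⟩

lemma col_lt {Jf : Fin r → Fin l × Fin m} {x : Fam n r} {a b : Fin r} {t : ℕ}
    (h : Col Jf x a b t) : t < l :=
  lt_of_le_of_lt h.2.1 (Jf (x.1 a)).1.isLt

variable (Jf : Fin r → Fin l × Fin m)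

open Classical in
/-- The least index whose path collides with another. -/
noncomputable def a0 (x : Fam n r) (h : ∃ a b t, Col Jf x a b t) : Fin r :=
  (Finset.univ.filter fun a => ∃ b t, Col Jf x a b t).min'
    ⟨h.choose, Finset.mem_filter.2 ⟨Finset.mem_univ _, h.choose_spec⟩⟩

open Classical in
lemma a0_spec (x : Fam n r) (h : ∃ a b t, Col Jf x a b t) :
    ∃ b t, Col Jf x (a0 Jf x h) b t := by
  have := Finset.min'_mem (Finset.univ.filter fun a => ∃ b t, Col Jf x a b t)
    ⟨h.choose, Finset.mem_filter.2 ⟨Finset.mem_univ _, h.choose_spec⟩⟩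
  exact (Finset.mem_filter.1 this).2

open Classical in
lemma a0_min (x : Fam n r) (h : ∃ a b t, Col Jf x a b t) {c : Fin r}
    (hc : ∃ b t, Col Jf x c b t) : a0 Jf x h ≤ c :=
  Finset.min'_le (Finset.univ.filter fun a => ∃ b t, Col Jf x a b t) c
    (Finset.mem_filter.2 ⟨Finset.mem_univ _, hc⟩)

open Classical in
/-- The least collision time of the path `a0`. -/
noncomputable def t0 (x : Fam n r) (h : ∃ a b t, Col Jf x a b t) : ℕ :=
  ((Finset.range (l + 1)).filter fun t => ∃ b, Col Jf x (a0 Jf x h) b t).min'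
    (by
      obtain ⟨b, t, hc⟩ := a0_spec Jf x h
      exact ⟨t, Finset.mem_filter.2
        ⟨Finset.mem_range.2 (by have := col_lt hc; omega), b, hc⟩⟩)

open Classical in
lemma t0_spec (x : Fam n r) (h : ∃ a b t, Col Jf x a b t) :
    ∃ b, Col Jf x (a0 Jf x h) b (t0 Jf x h) := by
  have := Finset.min'_mem ((Finset.range (l + 1)).filter
    fun t => ∃ b, Col Jf x (a0 Jf x h) b t)
    (by
      obtain ⟨b, t, hc⟩ := a0_spec Jf x h
      exact ⟨t, Finset.mem_filter.2
        ⟨Finset.mem_range.2 (by have := col_lt hc; omega), b, hc⟩⟩)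
  exact (Finset.mem_filter.1 this).2

open Classical in
lemma t0_min (x : Fam n r) (h : ∃ a b t, Col Jf x a b t) {s : ℕ}
    (hs : ∃ b, Col Jf x (a0 Jf x h) b s) : t0 Jf x h ≤ s := by
  refine Finset.min'_le ((Finset.range (l + 1)).filter
    fun t => ∃ b, Col Jf x (a0 Jf x h) b t) s (Finset.mem_filter.2 ⟨?_, hs⟩)
  obtain ⟨b, hc⟩ := hs
  exact Finset.mem_range.2 (by have := col_lt hc; omega)

open Classical in
/-- The least index colliding with `a0` at time `t0`. -/
noncomputable def b0 (x : Fam n r) (h : ∃ a b t, Col Jf x a b t) : Fin r :=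
  (Finset.univ.filter fun b => Col Jf x (a0 Jf x h) b (t0 Jf x h)).min'
    (by
      obtain ⟨b, hc⟩ := t0_spec Jf x h
      exact ⟨b, Finset.mem_filter.2 ⟨Finset.mem_univ _, hc⟩⟩)

open Classical in
lemma b0_spec (x : Fam n r) (h : ∃ a b t, Col Jf x a b t) :
    Col Jf x (a0 Jf x h) (b0 Jf x h) (t0 Jf x h) := by
  have := Finset.min'_mem (Finset.univ.filter
    fun b => Col Jf x (a0 Jf x h) b (t0 Jf x h))
    (by
      obtain ⟨b, hc⟩ := t0_spec Jf x h
      exact ⟨b, Finset.mem_filter.2 ⟨Finset.mem_univ _, hc⟩⟩)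
  exact (Finset.mem_filter.1 this).2

open Classical in
lemma b0_min (x : Fam n r) (h : ∃ a b t, Col Jf x a b t) {d : Fin r}
    (hd : Col Jf x (a0 Jf x h) d (t0 Jf x h)) : b0 Jf x h ≤ d :=
  Finset.min'_le (Finset.univ.filter fun b => Col Jf x (a0 Jf x h) b (t0 Jf x h)) d
    (Finset.mem_filter.2 ⟨Finset.mem_univ _, hd⟩)

/-- `(a, b, t)` is the canonical collision triple. -/
structure Canon (x : Fam n r) (a b : Fin r) (t : ℕ) : Prop where
  col : Col Jf x a b t
  amin : ∀ c d s, Col Jf x c d s → a ≤ c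
  tmin : ∀ d s, Col Jf x a d s → t ≤ s
  bmin : ∀ d, Col Jf x a d t → b ≤ d

lemma canon_spec (x : Fam n r) (h : ∃ a b t, Col Jf x a b t) :
    Canon Jf x (a0 Jf x h) (b0 Jf x h) (t0 Jf x h) :=
  ⟨b0_spec Jf x h, fun _ d s hcs => a0_min Jf x h ⟨d, s, hcs⟩,
    fun d s hds => t0_min Jf x h ⟨d, hds⟩, fun d hd => b0_min Jf x h hd⟩

lemma canon_eq (x : Fam n r) (h : ∃ a b t, Col Jf x a b t) {a b : Fin r} {t : ℕ}
    (hc : Canon Jf x a b t) :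
    a0 Jf x h = a ∧ t0 Jf x h = t ∧ b0 Jf x h = b := by
  have ha : a0 Jf x h = a := by
    refine le_antisymm (a0_min Jf x h ⟨b, t, hc.col⟩) ?_
    obtain ⟨d, s, hcs⟩ := a0_spec Jf x h
    exact hc.amin _ d s hcs
  have ht : t0 Jf x h = t := by
    refine le_antisymm (t0_min Jf x h (by rw [ha]; exact ⟨b, hc.col⟩)) ?_
    obtain ⟨d, hd⟩ := t0_spec Jf x h
    rw [ha] at hd
    exact hc.tmin d _ hd
  have hb : b0 Jf x h = b := by
    refine le_antisymm (b0_min Jf x h (by rw [ha, ht]; exact hc.col)) ?_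
    have hd := b0_spec Jf x h
    rw [ha, ht] at hd
    exact hc.bmin _ hd
  exact ⟨ha, ht, hb⟩

section canonSwap

variable {Jf} {x : Fam n r} {a b : Fin r} {t : ℕ}

/-- Collisions of untouched paths in the swapped family come from collisions in `x`. -/
lemma swapAt_col_transfer (hcol : Col Jf x a b t) {c d : Fin r} {s : ℕ}
    (hca : c ≠ a) (hcb : c ≠ b) (hc : Col Jf (swapAt x a b t) c d s) :
    ∃ d' s', Col Jf x c d' s' := by
  obtain ⟨hab, hta, htb, hst⟩ := hcol
  obtain ⟨hcd, h1, h2, h3⟩ := hc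
  rw [swapAt_kap_other hca hcb] at h1
  rw [swapAt_snd_other hca hcb] at h3
  by_cases hda : d = a
  · rw [hda] at h2 h3
    rw [swapAt_kap_a] at h2
    rw [swapAt_snd_a] at h3
    by_cases hs : s ≤ t
    · rw [splice_le hs] at h3
      exact ⟨a, s, hca, h1, le_trans hs hta, h3⟩
    · rw [splice_gt (by omega)] at h3
      exact ⟨b, s, hcb, h1, h2, h3⟩
  by_cases hdb : d = b
  · rw [hdb] at h2 h3
    rw [swapAt_kap_b] at h2
    rw [swapAt_snd_b hab] at h3
    by_cases hs : s ≤ t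
    · rw [splice_le hs] at h3
      exact ⟨b, s, hcb, h1, le_trans hs htb, h3⟩
    · rw [splice_gt (by omega)] at h3
      exact ⟨a, s, hca, h1, h2, h3⟩
  · rw [swapAt_kap_other hda hdb] at h2
    rw [swapAt_snd_other hda hdb] at h3
    exact ⟨d, s, hcd, h1, h2, h3⟩

lemma swapAt_canon (hc : Canon Jf x a b t) : Canon Jf (swapAt x a b t) a b t := by
  have hcol := hc.col
  obtain ⟨hab, hta, htb, hst⟩ := hc.col
  refine ⟨swapAt_col hcol, ?_, ?_, ?_⟩
  · intro c d s hcs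
    by_cases hca : c = a
    · rw [hca]
    by_cases hcb : c = b
    · rw [hcb]; exact hc.amin b a t hcol.symm
    · obtain ⟨d', s', hcs'⟩ := swapAt_col_transfer hcol hca hcb hcs
      exact hc.amin c d' s' hcs'
  · intro d s hds
    by_contra hts
    push_neg at hts
    obtain ⟨had, h1, h2, h3⟩ := hds
    rw [swapAt_kap_a] at h1
    rw [swapAt_snd_a, splice_le (by omega)] at h3
    have hda : d ≠ a := fun hd => had hd.symm
    by_cases hdb : d = b
    · rw [hdb] at h3
      rw [swapAt_snd_b hab, splice_le (by omega)] at h3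
      have : Col Jf x a b s := ⟨hab, by omega, by omega, h3⟩
      exact absurd (hc.tmin b s this) (by omega)
    · rw [swapAt_kap_other hda hdb] at h2
      rw [swapAt_snd_other hda hdb] at h3
      have : Col Jf x a d s := ⟨had, by omega, h2, h3⟩
      exact absurd (hc.tmin d s this) (by omega)
  · intro d hd
    obtain ⟨had, h1, h2, h3⟩ := hd
    rw [swapAt_snd_a, splice_le le_rfl] at h3
    have hda : d ≠ a := fun hh => had hh.symm
    by_cases hdb : d = b
    · exact hdb.symm ▸ le_rfl
    · rw [swapAt_kap_other hda hdb] at h2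
      rw [swapAt_snd_other hda hdb] at h3
      exact hc.bmin d ⟨fun h' => hda h'.symm, hta, h2, h3⟩

end canonSwap

open Classical in
/-- The sign-reversing involution on admissible non-disjoint families. -/
noncomputable def gsw (x : Fam n r) : Fam n r :=
  if h : ∃ a b t, Col Jf x a b t then swapAt x (a0 Jf x h) (b0 Jf x h) (t0 Jf x h) else x

open Classical in
lemma gsw_eq (x : Fam n r) (h : ∃ a b t, Col Jf x a b t) :
    gsw Jf x = swapAt x (a0 Jf x h) (b0 Jf x h) (t0 Jf x h) := dif_pos h

lemma gsw_props {R : Type*} [CommRing R] (A : Matrix (Fin n) (Fin n) R)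
    (B : Matrix (Fin n) (Fin m) R) (If : Fin r → Fin n)
    {x : Fam n r} (hx : Adm If Jf x) (h : ∃ a b t, Col Jf x a b t) :
    Adm If Jf (gsw Jf x) ∧ (∃ a b t, Col Jf (gsw Jf x) a b t) ∧
      gsw Jf (gsw Jf x) = x ∧ wgt A B Jf (gsw Jf x) = - wgt A B Jf x ∧
      (gsw Jf x).1 ≠ x.1 := by
  have hc := canon_spec Jf x h
  have hcol := hc.col
  have hab := hcol.1
  rw [gsw_eq Jf x h]
  set aa := a0 Jf x h
  set bb := b0 Jf x h
  set tt := t0 Jf x h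
  have hcol' : Col Jf (swapAt x aa bb tt) aa bb tt := swapAt_col hcol
  have h' : ∃ a b t, Col Jf (swapAt x aa bb tt) a b t := ⟨aa, bb, tt, hcol'⟩
  refine ⟨swapAt_adm hx hcol, h', ?_, swapAt_wgt A B hcol, swapAt_fst_ne hab⟩
  rw [gsw_eq Jf _ h']
  obtain ⟨ha, ht, hb⟩ := canon_eq Jf _ h' (swapAt_canon hc)
  rw [ha, ht, hb]
  exact swapAt_swapAt hab

end LGVAux


/-- Lindström–Gessel–Viennot identity for the controllability matrix: for row
indices `If` and column indices `Jf` (both injective, `|I| = |J| = r`), the minor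
`det C_l(I,J)` equals the signed sum of weights over all `(J,I)`-linkings in the
dynamic graph `D_l(A,B)`. -/
theorem det_ctrlMat_submatrix_eq_sum_linkings
    (R : Type*) [CommRing R] {n m l r : ℕ}
    (A : Matrix (Fin n) (Fin n) R) (B : Matrix (Fin n) (Fin m) R)
    (If : Fin r → Fin n) (Jf : Fin r → Fin l × Fin m)
    (hI : Function.Injective If) (hJ : Function.Injective Jf) :
    ((ctrlMatR R A B l).submatrix If Jf).det =
      ∑ᶠ x ∈ {x : Equiv.Perm (Fin r) × (Fin r → ℕ → Fin n) | IsLinking If Jf x},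
        ((Equiv.Perm.sign x.1 : ℤ) : R) *
          ∏ a : Fin r,
            pathWeight A B (x.2 a) ((Jf (x.1 a)).1 : ℕ) (Jf (x.1 a)).2 := by
  classical
  have hL : {x : Equiv.Perm (Fin r) × (Fin r → ℕ → Fin n) | IsLinking If Jf x}.Finite :=
    (LGVAux.adm_finite If Jf).subset fun x hx => ((LGVAux.isLinking_iff If Jf x).1 hx).1
  rw [finsum_mem_eq_finite_toFinset_sum _ hL, LGVAux.stepA A B If Jf]
  have hsub : hL.toFinset ⊆ (LGVAux.adm_finite If Jf).toFinset := by
    intro x hx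
    rw [Set.Finite.mem_toFinset] at hx ⊢
    exact ((LGVAux.isLinking_iff If Jf x).1 hx).1
  have hD : ∀ x ∈ (LGVAux.adm_finite If Jf).toFinset \ hL.toFinset,
      LGVAux.Adm If Jf x ∧ ∃ a b t, LGVAux.Col Jf x a b t := by
    intro x hx
    rw [Finset.mem_sdiff, Set.Finite.mem_toFinset, Set.Finite.mem_toFinset] at hx
    refine ⟨hx.1, ?_⟩
    by_contra hno
    push_neg at hno
    exact hx.2 ((LGVAux.isLinking_iff If Jf x).2 ⟨hx.1, fun a b t => hno a b t⟩)
  have hsum0 : ∑ x ∈ (LGVAux.adm_finite If Jf).toFinset \ hL.toFinset,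
      LGVAux.wgt A B Jf x = 0 := by
    refine Finset.sum_involution (fun x _ => LGVAux.gsw Jf x) ?_ ?_ ?_ ?_
    · intro x hx
      obtain ⟨hadm, hcol⟩ := hD x hx
      rw [(LGVAux.gsw_props Jf A B If hadm hcol).2.2.2.1]
      ring
    · intro x hx _
      obtain ⟨hadm, hcol⟩ := hD x hx
      intro heq
      exact (LGVAux.gsw_props Jf A B If hadm hcol).2.2.2.2 (congrArg Prod.fst heq)
    · intro x hx
      obtain ⟨hadm, hcol⟩ := hD x hx
      obtain ⟨hadm', hcol', _, _, _⟩ := LGVAux.gsw_props Jf A B If hadm hcol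
      rw [Finset.mem_sdiff, Set.Finite.mem_toFinset, Set.Finite.mem_toFinset]
      refine ⟨hadm', fun hlink => ?_⟩
      obtain ⟨a, b, t, hc⟩ := hcol'
      exact ((LGVAux.isLinking_iff If Jf _).1 hlink).2 a b t hc
    · intro x hx
      obtain ⟨hadm, hcol⟩ := hD x hx
      exact (LGVAux.gsw_props Jf A B If hadm hcol).2.2.1
  calc ∑ x ∈ (LGVAux.adm_finite If Jf).toFinset, LGVAux.wgt A B Jf x
      = (∑ x ∈ (LGVAux.adm_finite If Jf).toFinset \ hL.toFinset, LGVAux.wgt A B Jf x)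
        + ∑ x ∈ hL.toFinset, LGVAux.wgt A B Jf x := (Finset.sum_sdiff hsub).symm
    _ = ∑ x ∈ hL.toFinset, LGVAux.wgt A B Jf x := by rw [hsum0, zero_add]
    _ = ∑ x ∈ hL.toFinset, ((Equiv.Perm.sign x.1 : ℤ) : R) *
          ∏ a : Fin r, pathWeight A B (x.2 a) ((Jf (x.1 a)).1 : ℕ) (Jf (x.1 a)).2 :=
        Finset.sum_congr rfl fun x _ => rfl
end

section
/- If there exists a set of vertex-disjoint paths in the dynamic graph D_l(A,B) from a subset J of the input vertices V_B to a subset I of the first-layer state vertices V_X with |I| = |J| = r, and this linking is the unique (J,I)-linking in D_l(A,B), then the generic rank of C_l(A,B) is at least r. -/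
open Finset

/-- The `k`-step controllability matrix `C_k(A,B) = [B, AB, ..., A^{k-1}B]`. -/
noncomputable def ctrlMat {n m : ℕ}
    (A : Matrix (Fin n) (Fin n) ℝ) (B : Matrix (Fin n) (Fin m) ℝ) (k : ℕ) :
    Matrix (Fin n) (Fin k × Fin m) ℝ :=
  fun i jc => (A ^ (jc.1 : ℕ) * B) i jc.2

/-- `M` is a realization of the zero-nonzero pattern `p`: entries outside the
pattern are fixed zeros. -/
def Realizes {α β : Type*} (p : α → β → Prop) (M : Matrix α β ℝ) : Prop :=
  ∀ i j, ¬ p i j → M i j = 0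

/-- `x = (π, σ)` is a `(J,I)`-linking of the dynamic graph `D_l(A,B)` of the
structured pair with patterns `pA, pB`: a family of pairwise vertex-disjoint
paths, the `a`-th going from the input vertex of column `Jf (π a)` to the
first-layer state vertex `If a`, using only edges corresponding to nonzero
entries of the patterns. Values of `σ a` beyond the top layer of the `a`-th
path are frozen so that the representation is unique. -/
def IsPatternLinking {n m l r : ℕ}
    (pA : Fin n → Fin n → Prop) (pB : Fin n → Fin m → Prop)
    (If : Fin r → Fin n) (Jf : Fin r → Fin l × Fin m)
    (x : Equiv.Perm (Fin r) × (Fin r → ℕ → Fin n)) : Prop :=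
  (∀ a, x.2 a 0 = If a) ∧
  (∀ a t, ((Jf (x.1 a)).1 : ℕ) ≤ t → x.2 a t = x.2 a ((Jf (x.1 a)).1 : ℕ)) ∧
  (∀ a b, a ≠ b → ∀ t, t ≤ ((Jf (x.1 a)).1 : ℕ) → t ≤ ((Jf (x.1 b)).1 : ℕ) →
    x.2 a t ≠ x.2 b t) ∧
  (∀ a, pB (x.2 a ((Jf (x.1 a)).1 : ℕ)) (Jf (x.1 a)).2) ∧
  (∀ a, ∀ t, t < ((Jf (x.1 a)).1 : ℕ) → pA (x.2 a t) (x.2 a (t + 1)))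

namespace GRaux

variable {n m l r : ℕ}

/-- clamped/padded access to a `Fin l`-indexed path. -/
def pad (hl : 0 < l) (g : Fin l → Fin n) (t : ℕ) : Fin n :=
  g ⟨min t (l - 1), by omega⟩

lemma pad_eq (hl : 0 < l) (g : Fin l → Fin n) (t : ℕ) (ht : t ≤ l - 1) :
    pad hl g t = g ⟨t, by omega⟩ := by
  simp only [pad, Nat.min_eq_left ht]

lemma pad_fin (hl : 0 < l) (g : Fin l → Fin n) (s : Fin l) :
    pad hl g (s : ℕ) = g s := by
  rw [pad_eq hl g s (by omega)]

/-- frozen beyond level `k`. -/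
def Frozen (hl : 0 < l) (g : Fin l → Fin n) (k : ℕ) : Prop :=
  ∀ t, k ≤ t → pad hl g t = pad hl g k

lemma frozen_congr (hl : 0 < l) {g₁ g₂ : Fin l → Fin n} {k : ℕ}
    (h : ∀ t, k ≤ t → pad hl g₁ t = pad hl g₂ t) :
    Frozen hl g₁ k ↔ Frozen hl g₂ k := by
  constructor <;> intro hf t ht
  · rw [← h t ht, ← h k le_rfl]; exact hf t ht
  · rw [h t ht, h k le_rfl]; exact hf t ht

/-- combine low part of `u` (levels `≤ q`) with high part of `v`. -/
def mixlo (u v : Fin l → Fin n) (q : ℕ) : Fin l → Fin n :=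
  fun s => if (s : ℕ) ≤ q then u s else v s

lemma pad_mixlo (hl : 0 < l) (u v : Fin l → Fin n) (q t : ℕ) :
    pad hl (mixlo u v q) t =
      if min t (l - 1) ≤ q then pad hl u t else pad hl v t := by
  by_cases h : min t (l - 1) ≤ q <;>
    simp [pad, mixlo, h]

lemma pad_mixlo_low (hl : 0 < l) (u v : Fin l → Fin n) {q t : ℕ} (ht : t ≤ q) :
    pad hl (mixlo u v q) t = pad hl u t := by
  rw [pad_mixlo, if_pos (le_trans (min_le_left _ _) ht)]

lemma pad_mixlo_high (hl : 0 < l) (u v : Fin l → Fin n) {q k : ℕ}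
    (hq : q ≤ k) (hk : k ≤ l - 1) (hm : pad hl u q = pad hl v q) :
    ∀ t, k ≤ t → pad hl (mixlo u v q) t = pad hl v t := by
  intro t ht
  rw [pad_mixlo]
  by_cases h : min t (l - 1) ≤ q
  · have hmin : min t (l - 1) = q := by omega
    have hq' : min q (l - 1) = q := by omega
    have h1 : pad hl u t = pad hl u q := by
      simp only [pad, hmin, hq']
    have h2 : pad hl v t = pad hl v q := by
      simp only [pad, hmin, hq']
    rw [if_pos h, h1, h2, hm]
  · rw [if_neg h]

lemma chunk (hl : 0 < l) (A : Matrix (Fin n) (Fin n) ℝ) (u v : Fin l → Fin n)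
    {q K : ℕ} (hqK : q ≤ K) (hK : K ≤ l - 1) (hm : pad hl u q = pad hl v q) :
    ∏ t ∈ Finset.range K,
        A (pad hl (mixlo u v q) t) (pad hl (mixlo u v q) (t + 1))
      = (∏ t ∈ Finset.range q, A (pad hl u t) (pad hl u (t + 1))) *
        ∏ t ∈ Finset.Ico q K, A (pad hl v t) (pad hl v (t + 1)) := by
  rw [Finset.range_eq_Ico, ← Finset.prod_Ico_consecutive _ (Nat.zero_le q) hqK,
    ← Finset.range_eq_Ico]
  congr 1
  · refine Finset.prod_congr rfl fun t ht => ?_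
    rw [Finset.mem_range] at ht
    rw [pad_mixlo_low hl u v (by omega), pad_mixlo_low hl u v (by omega)]
  · refine Finset.prod_congr rfl fun t ht => ?_
    rw [Finset.mem_Ico] at ht
    have h2 : pad hl (mixlo u v q) (t + 1) = pad hl v (t + 1) := by
      rw [pad_mixlo, if_neg (by omega)]
    rcases eq_or_lt_of_le ht.1 with rfl | hlt
    · rw [pad_mixlo_low hl u v le_rfl, hm, h2]
    · rw [pad_mixlo, if_neg (by omega), h2]

lemma prod_split (hl : 0 < l) (A : Matrix (Fin n) (Fin n) ℝ) (u : Fin l → Fin n)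
    {q K : ℕ} (hqK : q ≤ K) :
    ∏ t ∈ Finset.range K, A (pad hl u t) (pad hl u (t + 1))
      = (∏ t ∈ Finset.range q, A (pad hl u t) (pad hl u (t + 1))) *
        ∏ t ∈ Finset.Ico q K, A (pad hl u t) (pad hl u (t + 1)) := by
  rw [Finset.range_eq_Ico, ← Finset.prod_Ico_consecutive _ (Nat.zero_le q) hqK,
    ← Finset.range_eq_Ico]

open scoped Classical in
/-- weight of a path `g` for a column with top level `k` and input column `j2`,
with prescribed layer-0 vertex `i`. -/
noncomputable def wt (hl : 0 < l) (A : Matrix (Fin n) (Fin n) ℝ)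
    (B : Matrix (Fin n) (Fin m) ℝ) (k : ℕ) (j2 : Fin m) (i : Fin n)
    (g : Fin l → Fin n) : ℝ :=
  (if pad hl g 0 = i ∧ Frozen hl g k then 1 else 0) *
    ((∏ t ∈ Finset.range k, A (pad hl g t) (pad hl g (t + 1))) *
      B (pad hl g k) j2)


def shift (hl : 0 < l) (g : Fin l → Fin n) : Fin l → Fin n :=
  fun s => pad hl g ((s : ℕ) + 1)

lemma pad_shift (hl : 0 < l) (g : Fin l → Fin n) (t : ℕ) :
    pad hl (shift hl g) t = pad hl g (t + 1) := by
  simp only [pad, shift]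
  congr 1
  exact Fin.ext (by simp only []; omega)

def consF (hl : 0 < l) (c : Fin n) (g : Fin l → Fin n) : Fin l → Fin n :=
  fun s => if (s : ℕ) = 0 then c else g ⟨(s : ℕ) - 1, by omega⟩

lemma pad_cons_zero (hl : 0 < l) (c : Fin n) (g : Fin l → Fin n) :
    pad hl (consF hl c g) 0 = c := by
  simp [pad, consF]

lemma pad_cons_pos (hl : 0 < l) (hl2 : 1 < l) (c : Fin n) (g : Fin l → Fin n)
    (t : ℕ) (ht : 1 ≤ t) :
    pad hl (consF hl c g) t = pad hl g (min t (l - 1) - 1) := by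
  have h0 : min t (l - 1) ≠ 0 := by omega
  simp only [pad, consF, h0, if_false]
  congr 1
  exact Fin.ext (by simp only []; omega)

lemma entry_sum (hl : 0 < l) (A : Matrix (Fin n) (Fin n) ℝ)
    (B : Matrix (Fin n) (Fin m) ℝ) (k : ℕ) (hk : k ≤ l - 1) (i : Fin n)
    (j2 : Fin m) :
    (A ^ k * B) i j2 = ∑ g : Fin l → Fin n, wt hl A B k j2 i g := by
  classical
  induction k generalizing i with
  | zero =>
    rw [pow_zero, Matrix.one_mul]
    rw [Finset.sum_eq_single (fun _ : Fin l => i)]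
    · simp only [wt]
      have hp : ∀ t : ℕ, pad hl (fun _ : Fin l => i) t = i := fun t => rfl
      rw [if_pos ⟨hp 0, fun t _ => (hp t).trans (hp 0).symm⟩]
      simp [hp]
    · intro g _ hg
      simp only [wt]
      rw [if_neg, zero_mul]
      rintro ⟨h0, hf⟩
      apply hg
      funext s
      have : pad hl g (s : ℕ) = pad hl g 0 := hf (s : ℕ) (Nat.zero_le _)
      rw [pad_fin] at this
      rw [this, h0]
    · intro h; exact absurd (Finset.mem_univ _) h
  | succ k ih =>
    have hl2 : 1 < l := by omega
    have hk' : k ≤ l - 1 := by omega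
    rw [pow_succ', Matrix.mul_assoc, Matrix.mul_apply]
    have hrow : ∀ g : Fin l → Fin n,
        (∑ c : Fin n, A i c * wt hl A B k j2 c g) =
          (if Frozen hl g k then 1 else 0) *
            (A i (pad hl g 0) *
              ((∏ t ∈ Finset.range k, A (pad hl g t) (pad hl g (t + 1))) *
                B (pad hl g k) j2)) := by
      intro g
      rw [Finset.sum_eq_single (pad hl g 0)]
      · by_cases hf : Frozen hl g k
        · simp [wt, hf]
        · simp [wt, hf]
      · intro c _ hc
        have hno : ¬ (pad hl g 0 = c ∧ Frozen hl g k) := fun h => hc h.1.symm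
        simp only [wt, if_neg hno, zero_mul, mul_zero]
      · intro h; exact absurd (Finset.mem_univ _) h
    calc (∑ c : Fin n, A i c * (A ^ k * B) c j2)
        = ∑ c : Fin n, A i c * ∑ g : Fin l → Fin n, wt hl A B k j2 c g := by
          refine Finset.sum_congr rfl fun c _ => ?_
          rw [ih hk' c]
      _ = ∑ g : Fin l → Fin n, ∑ c : Fin n, A i c * wt hl A B k j2 c g := by
          rw [Finset.sum_comm]
          exact Finset.sum_congr rfl fun c _ => Finset.mul_sum _ _ _
      _ = ∑ g : Fin l → Fin n, (if Frozen hl g k then 1 else 0) *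
            (A i (pad hl g 0) *
              ((∏ t ∈ Finset.range k, A (pad hl g t) (pad hl g (t + 1))) *
                B (pad hl g k) j2)) :=
          Finset.sum_congr rfl fun g _ => hrow g
      _ = ∑ g ∈ Finset.univ.filter (fun g : Fin l → Fin n => Frozen hl g k),
            A i (pad hl g 0) *
              ((∏ t ∈ Finset.range k, A (pad hl g t) (pad hl g (t + 1))) *
                B (pad hl g k) j2) := by
          rw [Finset.sum_filter]
          exact Finset.sum_congr rfl fun g _ => by
            by_cases hf : Frozen hl g k <;> simp [hf]
      _ = ∑ g ∈ Finset.univ.filter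
            (fun g : Fin l → Fin n => pad hl g 0 = i ∧ Frozen hl g (k + 1)),
            (∏ t ∈ Finset.range (k + 1), A (pad hl g t) (pad hl g (t + 1))) *
              B (pad hl g (k + 1)) j2 := by
          refine Finset.sum_nbij' (consF hl i) (shift hl) ?_ ?_ ?_ ?_ ?_
          · intro g' hg'
            rw [Finset.mem_filter] at hg' ⊢
            refine ⟨Finset.mem_univ _, pad_cons_zero hl i g', ?_⟩
            intro t ht
            rw [pad_cons_pos hl hl2 i g' t (by omega),
              pad_cons_pos hl hl2 i g' (k + 1) (by omega)]
            rw [hg'.2 (min t (l - 1) - 1) (by omega), hg'.2 (min (k + 1) (l - 1) - 1) (by omega)]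
          · intro g hg
            rw [Finset.mem_filter] at hg ⊢
            refine ⟨Finset.mem_univ _, ?_⟩
            intro t ht
            rw [pad_shift, pad_shift, hg.2.2 (t + 1) (by omega), hg.2.2 (k + 1) le_rfl]
          · intro g' hg'
            rw [Finset.mem_filter] at hg'
            funext s'
            show pad hl (consF hl i g') ((s' : ℕ) + 1) = g' s'
            rw [pad_cons_pos hl hl2 i g' _ (by omega)]
            rcases Nat.lt_or_ge (s' : ℕ) (l - 1) with hs | hs
            · have : min ((s' : ℕ) + 1) (l - 1) - 1 = (s' : ℕ) := by omega
              rw [this, pad_fin]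
            · have hs' : (s' : ℕ) = l - 1 := by omega
              have : min ((s' : ℕ) + 1) (l - 1) - 1 = l - 2 := by omega
              rw [this, hg'.2 (l - 2) (by omega), ← hg'.2 (s' : ℕ) (by omega), pad_fin]
          · intro g hg
            rw [Finset.mem_filter] at hg
            funext s'
            show consF hl i (shift hl g) s' = g s'
            rcases Nat.eq_zero_or_pos (s' : ℕ) with hs | hs
            · simp only [consF, hs, if_pos rfl]
              have : pad hl g ((s' : ℕ)) = i := by rw [hs]; exact hg.2.1
              rw [← this, pad_fin]
              simp
            · simp only [consF, Nat.pos_iff_ne_zero.mp hs, if_false]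
              show pad hl g (((s' : ℕ) - 1) + 1) = g s'
              have : ((s' : ℕ) - 1) + 1 = (s' : ℕ) := by omega
              rw [this, pad_fin]
          · intro g' hg'
            rw [Finset.mem_filter] at hg'
            have hcp : ∀ t : ℕ, 1 ≤ t → t ≤ l - 1 →
                pad hl (consF hl i g') t = pad hl g' (t - 1) := by
              intro t h1 h2
              rw [pad_cons_pos hl hl2 i g' t h1, Nat.min_eq_left h2]
            rw [Finset.prod_range_succ']
            rw [pad_cons_zero hl i g', hcp (k + 1) (by omega) (by omega)]
            have h1 : pad hl (consF hl i g') 1 = pad hl g' 0 := hcp 1 le_rfl (by omega)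
            have hfac : ∀ t ∈ Finset.range k,
                A (pad hl (consF hl i g') (t + 1)) (pad hl (consF hl i g') (t + 1 + 1)) =
                  A (pad hl g' t) (pad hl g' (t + 1)) := by
              intro t ht
              rw [Finset.mem_range] at ht
              rw [hcp (t + 1) (by omega) (by omega), hcp (t + 1 + 1) (by omega) (by omega)]
              simp only [Nat.add_sub_cancel]
            rw [Finset.prod_congr rfl hfac, h1]
            have hk1 : (k + 1) - 1 = k := by omega
            rw [hk1]
            ring
      _ = ∑ g : Fin l → Fin n, wt hl A B (k + 1) j2 i g := by
          rw [Finset.sum_filter]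
          exact Finset.sum_congr rfl fun g _ => by
            simp only [wt]
            by_cases hc : pad hl g 0 = i ∧ Frozen hl g (k + 1) <;> simp [hc]

def kk (Jf : Fin r → Fin l × Fin m) (c : Fin r) : ℕ := ((Jf c).1 : ℕ)

lemma kk_le (Jf : Fin r → Fin l × Fin m) (c : Fin r) : kk Jf c ≤ l - 1 := by
  have := (Jf c).1.isLt; unfold kk; omega

/-- paths of columns `c` and `d` meet at time `t`. -/
def Meets (hl : 0 < l) (Jf : Fin r → Fin l × Fin m)
    (h : Fin r → Fin l → Fin n) (c d : Fin r) (t : ℕ) : Prop :=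
  t ≤ kk Jf c ∧ t ≤ kk Jf d ∧ pad hl (h c) t = pad hl (h d) t

lemma Meets.symm {hl : 0 < l} {Jf : Fin r → Fin l × Fin m}
    {h : Fin r → Fin l → Fin n} {c d : Fin r} {t : ℕ}
    (hm : Meets hl Jf h c d t) : Meets hl Jf h d c t :=
  ⟨hm.2.1, hm.1, hm.2.2.symm⟩

def Bad (hl : 0 < l) (Jf : Fin r → Fin l × Fin m)
    (h : Fin r → Fin l → Fin n) : Prop :=
  ∃ c d t, c ≠ d ∧ Meets hl Jf h c d t

def Good (hl : 0 < l) (Jf : Fin r → Fin l × Fin m)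
    (h : Fin r → Fin l → Fin n) : Prop :=
  ∀ c d, c ≠ d → ∀ t, t ≤ kk Jf c → t ≤ kk Jf d →
    pad hl (h c) t ≠ pad hl (h d) t

lemma not_good_iff_bad (hl : 0 < l) (Jf : Fin r → Fin l × Fin m)
    (h : Fin r → Fin l → Fin n) : ¬ Good hl Jf h ↔ Bad hl Jf h := by
  unfold Good Bad Meets
  push_neg
  constructor
  · rintro ⟨c, d, hcd, t, h1, h2, h3⟩; exact ⟨c, d, t, hcd, h1, h2, h3⟩
  · rintro ⟨c, d, t, hcd, h1, h2, h3⟩; exact ⟨c, d, hcd, t, h1, h2, h3⟩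

/-- tail-swap of the paths of columns `i` and `j` below level `q`. -/
def hswap (h : Fin r → Fin l → Fin n) (i j : Fin r) (q : ℕ) :
    Fin r → Fin l → Fin n :=
  fun c => if c = i then mixlo (h j) (h i) q
    else if c = j then mixlo (h i) (h j) q else h c

section SwapFacts

variable {hl : 0 < l} {Jf : Fin r → Fin l × Fin m}
  {h : Fin r → Fin l → Fin n} {i j : Fin r} {q : ℕ}

lemma hswap_other {c : Fin r} (hci : c ≠ i) (hcj : c ≠ j) :
    hswap h i j q c = h c := by
  simp [hswap, hci, hcj]

lemma hswap_i : hswap h i j q i = mixlo (h j) (h i) q := by simp [hswap]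

lemma hswap_j (hij : i ≠ j) : hswap h i j q j = mixlo (h i) (h j) q := by
  simp [hswap, Ne.symm hij]

lemma pad_hswap_low (hij : i ≠ j) (hmt : Meets hl Jf h i j q)
    (c : Fin r) {t' : ℕ} (ht' : t' ≤ q) :
    pad hl (hswap h i j q c) t' = pad hl (h (Equiv.swap i j c)) t' := by
  by_cases hci : c = i
  · subst hci
    rw [hswap_i, pad_mixlo_low hl _ _ ht', Equiv.swap_apply_left]
  by_cases hcj : c = j
  · subst hcj
    rw [hswap_j hij, pad_mixlo_low hl _ _ ht', Equiv.swap_apply_right]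
  · rw [hswap_other hci hcj, Equiv.swap_apply_of_ne_of_ne hci hcj]

lemma pad_hswap_high (hij : i ≠ j) (hmt : Meets hl Jf h i j q)
    (c : Fin r) {t' : ℕ} (ht' : q ≤ t') :
    pad hl (hswap h i j q c) t' = pad hl (h c) t' := by
  have hq1 : q ≤ l - 1 := le_trans hmt.1 (kk_le Jf i)
  by_cases hci : c = i
  · subst hci
    rw [hswap_i]
    exact pad_mixlo_high hl _ _ le_rfl hq1 hmt.2.2.symm t' ht'
  by_cases hcj : c = j
  · subst hcj
    rw [hswap_j hij]
    exact pad_mixlo_high hl _ _ le_rfl hq1 hmt.2.2 t' ht'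
  · rw [hswap_other hci hcj]

lemma meets_hswap_low (hij : i ≠ j) (hmt : Meets hl Jf h i j q)
    {c d : Fin r} {t' : ℕ} (ht' : t' ≤ q) :
    Meets hl Jf (hswap h i j q) c d t' ↔
      Meets hl Jf h (Equiv.swap i j c) (Equiv.swap i j d) t' := by
  have bnd : ∀ c : Fin r, (t' ≤ kk Jf c ↔ t' ≤ kk Jf (Equiv.swap i j c)) := by
    intro c
    by_cases hci : c = i
    · subst hci; rw [Equiv.swap_apply_left]
      exact ⟨fun _ => le_trans ht' hmt.2.1, fun _ => le_trans ht' hmt.1⟩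
    by_cases hcj : c = j
    · subst hcj; rw [Equiv.swap_apply_right]
      exact ⟨fun _ => le_trans ht' hmt.1, fun _ => le_trans ht' hmt.2.1⟩
    · rw [Equiv.swap_apply_of_ne_of_ne hci hcj]
  unfold Meets
  rw [pad_hswap_low hij hmt c ht', pad_hswap_low hij hmt d ht']
  exact and_congr (bnd c) (and_congr (bnd d) Iff.rfl)

lemma meets_hswap_high (hij : i ≠ j) (hmt : Meets hl Jf h i j q)
    {c d : Fin r} {t' : ℕ} (ht' : q ≤ t') :
    Meets hl Jf (hswap h i j q) c d t' ↔ Meets hl Jf h c d t' := by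
  unfold Meets
  rw [pad_hswap_high hij hmt c ht', pad_hswap_high hij hmt d ht']

lemma hswap_hswap (hij : i ≠ j) : hswap (hswap h i j q) i j q = h := by
  funext c s
  by_cases hci : c = i
  · subst hci
    rw [hswap_i, hswap_i, hswap_j hij]
    by_cases hs : (s : ℕ) ≤ q <;> simp [mixlo, hs]
  by_cases hcj : c = j
  · subst hcj
    rw [hswap_j hij, hswap_i, hswap_j hij]
    by_cases hs : (s : ℕ) ≤ q <;> simp [mixlo, hs]
  · rw [hswap_other hci hcj, hswap_other hci hcj]

end SwapFacts

section Sel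

variable (hl : 0 < l) (Jf : Fin r → Fin l × Fin m) (h : Fin r → Fin l → Fin n)

open scoped Classical in
noncomputable def S1 : Finset (Fin r) :=
  Finset.univ.filter fun c => ∃ d t', c ≠ d ∧ Meets hl Jf h c d t'

lemma mem_S1 {c : Fin r} :
    c ∈ S1 hl Jf h ↔ ∃ d t', c ≠ d ∧ Meets hl Jf h c d t' := by
  classical
  simp [S1]

lemma S1_nonempty (hb : Bad hl Jf h) : (S1 hl Jf h).Nonempty := by
  obtain ⟨c, d, t', hcd, hm⟩ := hb
  exact ⟨c, (mem_S1 hl Jf h).2 ⟨d, t', hcd, hm⟩⟩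

noncomputable def isel (hb : Bad hl Jf h) : Fin r :=
  (S1 hl Jf h).min' (S1_nonempty hl Jf h hb)

open scoped Classical in
noncomputable def T1 (i : Fin r) : Finset ℕ :=
  (Finset.range l).filter fun t' => ∃ d, i ≠ d ∧ Meets hl Jf h i d t'

lemma mem_T1 {i : Fin r} {t' : ℕ} :
    t' ∈ T1 hl Jf h i ↔ t' < l ∧ ∃ d, i ≠ d ∧ Meets hl Jf h i d t' := by
  classical
  simp [T1]

lemma T1_nonempty (hb : Bad hl Jf h) :
    (T1 hl Jf h (isel hl Jf h hb)).Nonempty := by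
  have hmem := (S1 hl Jf h).min'_mem (S1_nonempty hl Jf h hb)
  rw [mem_S1] at hmem
  obtain ⟨d, t', hne, hm⟩ := hmem
  have h1 : t' ≤ l - 1 := le_trans hm.1 (kk_le Jf _)
  exact ⟨t', (mem_T1 hl Jf h).2 ⟨by omega, d, hne, hm⟩⟩

noncomputable def tsel (hb : Bad hl Jf h) : ℕ :=
  (T1 hl Jf h (isel hl Jf h hb)).max' (T1_nonempty hl Jf h hb)

open scoped Classical in
noncomputable def S2 (i : Fin r) (q : ℕ) : Finset (Fin r) :=
  Finset.univ.filter fun d => i ≠ d ∧ Meets hl Jf h i d q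

lemma mem_S2 {i d : Fin r} {q : ℕ} :
    d ∈ S2 hl Jf h i q ↔ i ≠ d ∧ Meets hl Jf h i d q := by
  classical
  simp [S2]

lemma S2_nonempty (hb : Bad hl Jf h) :
    (S2 hl Jf h (isel hl Jf h hb) (tsel hl Jf h hb)).Nonempty := by
  have hmem : tsel hl Jf h hb ∈ T1 hl Jf h (isel hl Jf h hb) :=
    (T1 hl Jf h _).max'_mem (T1_nonempty hl Jf h hb)
  rw [mem_T1] at hmem
  obtain ⟨-, d, hne, hm⟩ := hmem
  exact ⟨d, (mem_S2 hl Jf h).2 ⟨hne, hm⟩⟩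

noncomputable def jsel (hb : Bad hl Jf h) : Fin r :=
  (S2 hl Jf h (isel hl Jf h hb) (tsel hl Jf h hb)).min' (S2_nonempty hl Jf h hb)

variable {hl Jf h}

lemma sel_spec (hb : Bad hl Jf h) :
    isel hl Jf h hb ≠ jsel hl Jf h hb ∧
      Meets hl Jf h (isel hl Jf h hb) (jsel hl Jf h hb) (tsel hl Jf h hb) := by
  have hmem : jsel hl Jf h hb ∈ S2 hl Jf h (isel hl Jf h hb) (tsel hl Jf h hb) :=
    (S2 hl Jf h _ _).min'_mem (S2_nonempty hl Jf h hb)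
  rw [mem_S2] at hmem
  exact hmem

lemma sel_W3 (hb : Bad hl Jf h) {c d : Fin r} {t' : ℕ} (hcd : c ≠ d)
    (hm : Meets hl Jf h c d t') : isel hl Jf h hb ≤ c :=
  (S1 hl Jf h).min'_le c ((mem_S1 hl Jf h).2 ⟨d, t', hcd, hm⟩)

lemma sel_W4 (hb : Bad hl Jf h) {d : Fin r} {t' : ℕ}
    (hne : isel hl Jf h hb ≠ d) (hm : Meets hl Jf h (isel hl Jf h hb) d t') :
    t' ≤ tsel hl Jf h hb := by
  refine (T1 hl Jf h (isel hl Jf h hb)).le_max' t' ?_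
  have h1 : t' ≤ l - 1 := le_trans hm.1 (kk_le Jf _)
  exact (mem_T1 hl Jf h).2 ⟨by omega, d, hne, hm⟩

lemma sel_W5 (hb : Bad hl Jf h) {d : Fin r} (hne : isel hl Jf h hb ≠ d)
    (hm : Meets hl Jf h (isel hl Jf h hb) d (tsel hl Jf h hb)) :
    jsel hl Jf h hb ≤ d :=
  (S2 hl Jf h _ _).min'_le d ((mem_S2 hl Jf h).2 ⟨hne, hm⟩)

/-- abstract characterization of the canonical selection. -/
lemma sel_eq (hb : Bad hl Jf h) {i j : Fin r} {q : ℕ}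
    (W1 : i ≠ j) (W2 : Meets hl Jf h i j q)
    (W3 : ∀ c d t', c ≠ d → Meets hl Jf h c d t' → i ≤ c)
    (W4 : ∀ d t', i ≠ d → Meets hl Jf h i d t' → t' ≤ q)
    (W5 : ∀ d, i ≠ d → Meets hl Jf h i d q → j ≤ d) :
    isel hl Jf h hb = i ∧ tsel hl Jf h hb = q ∧ jsel hl Jf h hb = j := by
  have hi : isel hl Jf h hb = i := by
    refine le_antisymm ((S1 hl Jf h).min'_le i ((mem_S1 hl Jf h).2 ⟨j, q, W1, W2⟩)) ?_
    refine Finset.le_min' _ _ _ fun c hc => ?_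
    rw [mem_S1] at hc
    obtain ⟨d, t', hcd, hm⟩ := hc
    exact W3 c d t' hcd hm
  have ht : tsel hl Jf h hb = q := by
    refine le_antisymm ?_ ?_
    · have hmem : tsel hl Jf h hb ∈ T1 hl Jf h (isel hl Jf h hb) :=
        (T1 hl Jf h _).max'_mem (T1_nonempty hl Jf h hb)
      rw [mem_T1] at hmem
      obtain ⟨-, d, hne, hm⟩ := hmem
      generalize hq' : tsel hl Jf h hb = q' at hm ⊢
      rw [hi] at hne hm
      exact W4 d q' hne hm
    · refine (T1 hl Jf h (isel hl Jf h hb)).le_max' q ?_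
      rw [mem_T1, hi]
      have h1 : q ≤ l - 1 := le_trans W2.1 (kk_le Jf _)
      exact ⟨by omega, j, W1, W2⟩
  have hj : jsel hl Jf h hb = j := by
    refine le_antisymm ?_ ?_
    · refine Finset.min'_le _ _ ?_
      rw [mem_S2, ht, hi]
      exact ⟨W1, W2⟩
    · have hmem : jsel hl Jf h hb ∈ S2 hl Jf h (isel hl Jf h hb) (tsel hl Jf h hb) :=
        (S2 hl Jf h _ _).min'_mem (S2_nonempty hl Jf h hb)
      rw [mem_S2] at hmem
      obtain ⟨hne, hm⟩ := hmem
      generalize hj' : jsel hl Jf h hb = j' at hne hm ⊢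
      rw [ht] at hm
      rw [hi] at hne hm
      exact W5 j' hne hm
  exact ⟨hi, ht, hj⟩

end Sel

lemma swap_sel {hl : 0 < l} {Jf : Fin r → Fin l × Fin m}
    {h : Fin r → Fin l → Fin n} (hb : Bad hl Jf h) :
    ∃ hb' : Bad hl Jf (hswap h (isel hl Jf h hb) (jsel hl Jf h hb) (tsel hl Jf h hb)),
      isel hl Jf _ hb' = isel hl Jf h hb ∧ tsel hl Jf _ hb' = tsel hl Jf h hb ∧
        jsel hl Jf _ hb' = jsel hl Jf h hb := by
  obtain ⟨W1, W2⟩ := sel_spec hb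
  set i := isel hl Jf h hb with hi
  set j := jsel hl Jf h hb with hj
  set q := tsel hl Jf h hb with hq
  have hilej : i ≤ j := sel_W3 hb (Ne.symm W1) W2.symm
  have W2' : Meets hl Jf (hswap h i j q) i j q :=
    (meets_hswap_high W1 W2 le_rfl).2 W2
  have hb' : Bad hl Jf (hswap h i j q) := ⟨i, j, q, W1, W2'⟩
  have W3' : ∀ c d t', c ≠ d → Meets hl Jf (hswap h i j q) c d t' → i ≤ c := by
    intro c d t' hcd hm
    rcases le_or_gt t' q with hle | hgt
    · rw [meets_hswap_low W1 W2 hle] at hm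
      have h5 : i ≤ Equiv.swap i j c :=
        sel_W3 hb ((Equiv.swap i j).injective.ne hcd) hm
      by_cases hci : c = i
      · exact le_of_eq hci.symm
      by_cases hcj : c = j
      · subst hcj; exact hilej
      · rwa [Equiv.swap_apply_of_ne_of_ne hci hcj] at h5
    · rw [meets_hswap_high W1 W2 hgt.le] at hm
      exact sel_W3 hb hcd hm
  have W4' : ∀ d t', i ≠ d → Meets hl Jf (hswap h i j q) i d t' → t' ≤ q := by
    intro d t' hne hm
    by_contra hgt
    push_neg at hgt
    rw [meets_hswap_high W1 W2 hgt.le] at hm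
    exact absurd (sel_W4 hb hne hm) (by omega)
  have W5' : ∀ d, i ≠ d → Meets hl Jf (hswap h i j q) i d q → j ≤ d := by
    intro d hne hm
    rw [meets_hswap_high W1 W2 le_rfl] at hm
    exact sel_W5 hb hne hm
  exact ⟨hb', sel_eq hb' W1 W2' W3' W4' W5'⟩

lemma ite_and_mul (P Q : Prop) [Decidable P] [Decidable Q] :
    (if P ∧ Q then (1:ℝ) else 0) =
      (if P then (1:ℝ) else 0) * (if Q then (1:ℝ) else 0) := by
  by_cases hP : P <;> by_cases hQ : Q <;> simp [hP, hQ]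

open scoped Classical in
lemma wt_plain (hl : 0 < l) (A : Matrix (Fin n) (Fin n) ℝ)
    (B : Matrix (Fin n) (Fin m) ℝ) {k q : ℕ} (hq : q ≤ k) (j2 : Fin m)
    (i : Fin n) (u : Fin l → Fin n) :
    wt hl A B k j2 i u =
      (if pad hl u 0 = i then (1:ℝ) else 0) *
        (if Frozen hl u k then (1:ℝ) else 0) *
        ((∏ t ∈ Finset.range q, A (pad hl u t) (pad hl u (t + 1))) *
          (∏ t ∈ Finset.Ico q k, A (pad hl u t) (pad hl u (t + 1))) *
          B (pad hl u k) j2) := by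
  unfold wt
  rw [ite_and_mul, prod_split hl A u hq]
  try ring

open scoped Classical in
lemma wt_mix (hl : 0 < l) (A : Matrix (Fin n) (Fin n) ℝ)
    (B : Matrix (Fin n) (Fin m) ℝ) {k q : ℕ} (hq : q ≤ k) (hk : k ≤ l - 1)
    (j2 : Fin m) (i : Fin n) (u v : Fin l → Fin n)
    (hm : pad hl v q = pad hl u q) :
    wt hl A B k j2 i (mixlo v u q) =
      (if pad hl v 0 = i then (1:ℝ) else 0) *
        (if Frozen hl u k then (1:ℝ) else 0) *
        ((∏ t ∈ Finset.range q, A (pad hl v t) (pad hl v (t + 1))) *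
          (∏ t ∈ Finset.Ico q k, A (pad hl u t) (pad hl u (t + 1))) *
          B (pad hl u k) j2) := by
  unfold wt
  have h2 : ∀ t, k ≤ t → pad hl (mixlo v u q) t = pad hl u t :=
    pad_mixlo_high hl v u hq hk hm
  have h1 : pad hl (mixlo v u q) 0 = pad hl v 0 :=
    pad_mixlo_low hl v u (Nat.zero_le q)
  have h3 : (pad hl (mixlo v u q) 0 = i ∧ Frozen hl (mixlo v u q) k) ↔
      (pad hl v 0 = i ∧ Frozen hl u k) :=
    and_congr (by rw [h1]) (frozen_congr hl h2)
  rw [if_congr h3 rfl rfl, chunk hl A v u hq hk hm, h2 k le_rfl, ite_and_mul]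
  try ring

open scoped Classical in
lemma wt_pair (hl : 0 < l) (A : Matrix (Fin n) (Fin n) ℝ)
    (B : Matrix (Fin n) (Fin m) ℝ) {ki kj q : ℕ} (hki : ki ≤ l - 1)
    (hkj : kj ≤ l - 1) (hqi : q ≤ ki) (hqj : q ≤ kj) (u v : Fin l → Fin n)
    (hm : pad hl u q = pad hl v q) (iu iv : Fin n) (ju jv : Fin m) :
    wt hl A B ki ju iv (mixlo v u q) * wt hl A B kj jv iu (mixlo u v q) =
      wt hl A B ki ju iu u * wt hl A B kj jv iv v := by
  rw [wt_mix hl A B hqi hki ju iv u v hm.symm,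
    wt_mix hl A B hqj hkj jv iu v u hm,
    wt_plain hl A B hqi ju iu u, wt_plain hl A B hqj jv iv v]
  ring

lemma prod_swap_pair {ι : Type*} [Fintype ι] [DecidableEq ι] (f g : ι → ℝ)
    (a b : ι) (hab : a ≠ b) (hfg : ∀ c, c ≠ a → c ≠ b → f c = g c)
    (hpair : f a * f b = g a * g b) : ∏ c, f c = ∏ c, g c := by
  have key : ∀ F : ι → ℝ,
      ∏ c, F c = F a * F b * ∏ c ∈ (Finset.univ.erase a).erase b, F c := by
    intro F
    rw [mul_assoc,
      Finset.mul_prod_erase (Finset.univ.erase a) F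
        (Finset.mem_erase.2 ⟨Ne.symm hab, Finset.mem_univ b⟩),
      Finset.mul_prod_erase Finset.univ F (Finset.mem_univ a)]
  rw [key f, key g, hpair]
  congr 1
  refine Finset.prod_congr rfl fun c hc => ?_
  rw [Finset.mem_erase, Finset.mem_erase] at hc
  exact hfg c hc.2.1 hc.1

open scoped Classical in
/-- 0/1 state matrix supported on the edges of the linking `x₀`. -/
noncomputable def AM (Jf : Fin r → Fin l × Fin m)
    (x₀ : Equiv.Perm (Fin r) × (Fin r → ℕ → Fin n)) : Matrix (Fin n) (Fin n) ℝ :=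
  fun i j => if ∃ (a : Fin r) (t : ℕ), t < ((Jf (x₀.1 a)).1 : ℕ) ∧
    x₀.2 a t = i ∧ x₀.2 a (t + 1) = j then 1 else 0

open scoped Classical in
/-- 0/1 input matrix supported on the input edges of the linking `x₀`. -/
noncomputable def BM (Jf : Fin r → Fin l × Fin m)
    (x₀ : Equiv.Perm (Fin r) × (Fin r → ℕ → Fin n)) : Matrix (Fin n) (Fin m) ℝ :=
  fun i j => if ∃ a : Fin r, x₀.2 a ((Jf (x₀.1 a)).1 : ℕ) = i ∧
    (Jf (x₀.1 a)).2 = j then 1 else 0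

variable {Jf : Fin r → Fin l × Fin m}
  {x₀ : Equiv.Perm (Fin r) × (Fin r → ℕ → Fin n)}

lemma AM_eq_zero {pA : Fin n → Fin n → Prop}
    (hpat : ∀ a t, t < ((Jf (x₀.1 a)).1 : ℕ) → pA (x₀.2 a t) (x₀.2 a (t + 1)))
    {i j : Fin n} (hp : ¬ pA i j) : AM Jf x₀ i j = 0 := by
  unfold AM
  rw [if_neg]
  rintro ⟨a, t, ht, rfl, rfl⟩
  exact hp (hpat a t ht)

lemma BM_eq_zero {pB : Fin n → Fin m → Prop}
    (hpat : ∀ a, pB (x₀.2 a ((Jf (x₀.1 a)).1 : ℕ)) (Jf (x₀.1 a)).2)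
    {i : Fin n} {j : Fin m} (hp : ¬ pB i j) : BM Jf x₀ i j = 0 := by
  unfold BM
  rw [if_neg]
  rintro ⟨a, rfl, rfl⟩
  exact hp (hpat a)

lemma AM_one {a : Fin r} {t : ℕ} (ht : t < ((Jf (x₀.1 a)).1 : ℕ)) :
    AM Jf x₀ (x₀.2 a t) (x₀.2 a (t + 1)) = 1 := by
  unfold AM
  rw [if_pos ⟨a, t, ht, rfl, rfl⟩]

lemma BM_one (a : Fin r) :
    BM Jf x₀ (x₀.2 a ((Jf (x₀.1 a)).1 : ℕ)) (Jf (x₀.1 a)).2 = 1 := by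
  unfold BM
  rw [if_pos ⟨a, rfl, rfl⟩]

end GRaux

/-- If the dynamic graph `D_l(A,B)` of a structured pair contains a
vertex-disjoint linking of size `r` from a set `J` of input vertices to a set
`I` of first-layer state vertices, and this is the unique `(J,I)`-linking, then
the generic rank of `C_l(A,B)` is at least `r`: some realization attains
rank `≥ r`. -/
theorem genericRank_ge_of_unique_linking {n m l r : ℕ}
    (pA : Fin n → Fin n → Prop) (pB : Fin n → Fin m → Prop)
    (If : Fin r → Fin n) (Jf : Fin r → Fin l × Fin m)
    (hI : Function.Injective If) (hJ : Function.Injective Jf)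
    (x₀ : Equiv.Perm (Fin r) × (Fin r → ℕ → Fin n))
    (hx₀ : IsPatternLinking pA pB If Jf x₀)
    (huniq : ∀ x, IsPatternLinking pA pB If Jf x → x = x₀) :
    ∃ (A : Matrix (Fin n) (Fin n) ℝ) (B : Matrix (Fin n) (Fin m) ℝ),
      Realizes pA A ∧ Realizes pB B ∧ r ≤ (ctrlMat A B l).rank := by
  classical
  rcases Nat.eq_zero_or_pos r with hr | hr
  · exact ⟨0, 0, fun i j _ => rfl, fun i j _ => rfl, hr ▸ Nat.zero_le _⟩
  have hl : 0 < l := (Jf ⟨0, hr⟩).1.pos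
  obtain ⟨hx1, hx2, hx3, hx4, hx5⟩ := hx₀
  set A : Matrix (Fin n) (Fin n) ℝ := GRaux.AM Jf x₀ with hA
  set B : Matrix (Fin n) (Fin m) ℝ := GRaux.BM Jf x₀ with hB
  have hRA : Realizes pA A := fun i j hp => GRaux.AM_eq_zero hx5 hp
  have hRB : Realizes pB B := fun i j hp => GRaux.BM_eq_zero hx4 hp
  have hApat : ∀ i j, A i j ≠ 0 → pA i j := fun i j hne =>
    by_contra fun hp => hne (hRA i j hp)
  have hBpat : ∀ i j, B i j ≠ 0 → pB i j := fun i j hne =>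
    by_contra fun hp => hne (hRB i j hp)
  refine ⟨A, B, hRA, hRB, ?_⟩
  set σ₀ : Equiv.Perm (Fin r) := x₀.1⁻¹ with hσ₀
  set W : Equiv.Perm (Fin r) → (Fin r → Fin l → Fin n) → ℝ := fun σ h =>
    ∏ c, GRaux.wt hl A B (GRaux.kk Jf c) (Jf c).2 (If (σ c)) (h c) with hW
  set F : Equiv.Perm (Fin r) × (Fin r → Fin l → Fin n) → ℝ := fun p =>
    ((Equiv.Perm.sign p.1 : ℤ) : ℝ) * W p.1 p.2 with hF
  set Msub : Matrix (Fin r) (Fin r) ℝ := (ctrlMat A B l).submatrix If Jf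
    with hMsub
  have hdet : Msub.det = ∑ p : Equiv.Perm (Fin r) × (Fin r → Fin l → Fin n),
      F p := by
    have hentry : ∀ (a c : Fin r), Msub a c =
        ∑ g : Fin l → Fin n,
          GRaux.wt hl A B (GRaux.kk Jf c) (Jf c).2 (If a) g := fun a c =>
      GRaux.entry_sum hl A B (GRaux.kk Jf c) (GRaux.kk_le Jf c) (If a) (Jf c).2
    calc Msub.det
        = ∑ σ : Equiv.Perm (Fin r), ((Equiv.Perm.sign σ : ℤ) : ℝ) *
            ∏ c, Msub (σ c) c := Matrix.det_apply' Msub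
      _ = ∑ σ : Equiv.Perm (Fin r), ∑ h : Fin r → Fin l → Fin n, F (σ, h) := by
          refine Finset.sum_congr rfl fun σ _ => ?_
          have h1 : ∏ c, Msub (σ c) c = ∑ h : Fin r → Fin l → Fin n, W σ h := by
            rw [show (∏ c, Msub (σ c) c) = ∏ c, ∑ g : Fin l → Fin n,
                GRaux.wt hl A B (GRaux.kk Jf c) (Jf c).2 (If (σ c)) g from
              Finset.prod_congr rfl fun c _ => hentry (σ c) c]
            rw [Finset.prod_univ_sum, Fintype.piFinset_univ]
          rw [h1, Finset.mul_sum]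
      _ = ∑ p : Equiv.Perm (Fin r) × (Fin r → Fin l → Fin n), F p :=
          (Fintype.sum_prod_type _).symm
  have hgood : ∑ p ∈ Finset.univ.filter
      (fun p : Equiv.Perm (Fin r) × (Fin r → Fin l → Fin n) =>
        GRaux.Good hl Jf p.2), F p = ((Equiv.Perm.sign σ₀ : ℤ) : ℝ) := by
    set h₀ : Fin r → Fin l → Fin n := fun c s => x₀.2 (σ₀ c) (s : ℕ) with hh₀
    have hpad₀ : ∀ c t, GRaux.pad hl (h₀ c) t = x₀.2 (σ₀ c) (min t (l - 1)) :=
      fun c t => rfl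
    have happ : ∀ c, x₀.1 (σ₀ c) = c := fun c => x₀.1.apply_symm_apply c
    have hKc : ∀ c, ((Jf (x₀.1 (σ₀ c))).1 : ℕ) = GRaux.kk Jf c := fun c => by
      rw [happ c]; rfl
    have hgood₀ : GRaux.Good hl Jf h₀ := by
      intro c d hcd t htc htd
      rw [hpad₀, hpad₀]
      have hkle := GRaux.kk_le Jf c
      have h1 : min t (l - 1) = t := by omega
      rw [h1]
      exact hx3 (σ₀ c) (σ₀ d) (fun hh => hcd (σ₀.injective hh)) t
        (by rw [hKc c]; exact htc) (by rw [hKc d]; exact htd)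
    have hWc₀ : W σ₀ h₀ = 1 := by
      rw [hW]
      refine Finset.prod_eq_one fun c _ => ?_
      have hkle := GRaux.kk_le Jf c
      have hc0 : GRaux.pad hl (h₀ c) 0 = If (σ₀ c) := by
        rw [hpad₀]
        have h1 : min 0 (l - 1) = 0 := by omega
        rw [h1]
        exact hx1 (σ₀ c)
      have hfr : GRaux.Frozen hl (h₀ c) (GRaux.kk Jf c) := by
        intro t ht
        rw [hpad₀, hpad₀]
        have h2 : min (GRaux.kk Jf c) (l - 1) = GRaux.kk Jf c := by omega
        rw [h2]
        have h3 := hx2 (σ₀ c) (min t (l - 1)) (by rw [hKc c]; omega)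
        rw [h3, hKc c]
      have hpadt : ∀ t, t ≤ GRaux.kk Jf c →
          GRaux.pad hl (h₀ c) t = x₀.2 (σ₀ c) t := by
        intro t ht
        rw [hpad₀]
        have h1 : min t (l - 1) = t := by omega
        rw [h1]
      unfold GRaux.wt
      rw [if_pos ⟨hc0, hfr⟩, one_mul]
      have hAfac : ∀ t ∈ Finset.range (GRaux.kk Jf c),
          A (GRaux.pad hl (h₀ c) t) (GRaux.pad hl (h₀ c) (t + 1)) = 1 := by
        intro t ht
        rw [Finset.mem_range] at ht
        rw [hpadt t (by omega), hpadt (t + 1) (by omega)]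
        exact GRaux.AM_one (by rw [hKc c]; omega)
      rw [Finset.prod_congr rfl hAfac, Finset.prod_const_one, one_mul,
        hpadt _ le_rfl]
      have hb1 := GRaux.BM_one (Jf := Jf) (x₀ := x₀) (σ₀ c)
      rw [show ((Jf (x₀.1 (σ₀ c))).1 : ℕ) = GRaux.kk Jf c from hKc c,
        show (Jf (x₀.1 (σ₀ c))).2 = (Jf c).2 from by rw [happ c]] at hb1
      exact hb1
    rw [Finset.sum_eq_single_of_mem (σ₀, h₀)
      (Finset.mem_filter.2 ⟨Finset.mem_univ _, hgood₀⟩) ?zero]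
    · rw [hF]
      simp only [hWc₀, mul_one]
    case zero =>
      intro p hp hne
      by_contra hFne
      obtain ⟨σ, h⟩ := p
      have hgoodp : GRaux.Good hl Jf h := (Finset.mem_filter.1 hp).2
      have hWne : W σ h ≠ 0 := by
        intro h0
        apply hFne
        rw [hF]
        simp only [h0, mul_zero]
      have hwtne : ∀ c, GRaux.wt hl A B (GRaux.kk Jf c) (Jf c).2 (If (σ c))
          (h c) ≠ 0 := by
        rw [hW] at hWne
        exact fun c => Finset.prod_ne_zero_iff.1 hWne c (Finset.mem_univ c)
      have hcomp : ∀ c, (GRaux.pad hl (h c) 0 = If (σ c) ∧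
          GRaux.Frozen hl (h c) (GRaux.kk Jf c)) ∧
          (∀ t, t < GRaux.kk Jf c →
            A (GRaux.pad hl (h c) t) (GRaux.pad hl (h c) (t + 1)) ≠ 0) ∧
          B (GRaux.pad hl (h c) (GRaux.kk Jf c)) (Jf c).2 ≠ 0 := by
        intro c
        have hne0 := hwtne c
        unfold GRaux.wt at hne0
        by_cases hcnd : (GRaux.pad hl (h c) 0 = If (σ c) ∧
            GRaux.Frozen hl (h c) (GRaux.kk Jf c))
        · refine ⟨hcnd, ?_, ?_⟩
          · intro t ht hA0
            apply hne0
            rw [Finset.prod_eq_zero (Finset.mem_range.2 ht) hA0]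
            ring
          · intro hB0
            apply hne0
            rw [hB0]
            ring
        · exact absurd (by rw [if_neg hcnd]; ring) hne0
      set x : Equiv.Perm (Fin r) × (Fin r → ℕ → Fin n) :=
        (σ⁻¹, fun a t => GRaux.pad hl (h (σ⁻¹ a)) t) with hx
      have hxk : ∀ a, ((Jf (x.1 a)).1 : ℕ) = GRaux.kk Jf (σ⁻¹ a) := fun a => rfl
      have hlink : IsPatternLinking pA pB If Jf x := by
        refine ⟨?_, ?_, ?_, ?_, ?_⟩
        · intro a
          show GRaux.pad hl (h (σ⁻¹ a)) 0 = If a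
          rw [(hcomp (σ⁻¹ a)).1.1, Equiv.Perm.inv_def, Equiv.apply_symm_apply]
        · intro a t ht
          rw [hxk a] at ht
          exact (hcomp (σ⁻¹ a)).1.2 t ht
        · intro a b hab t hta htb
          rw [hxk a] at hta
          rw [hxk b] at htb
          exact hgoodp (σ⁻¹ a) (σ⁻¹ b) (fun hh => hab (σ⁻¹.injective hh)) t
            hta htb
        · intro a
          exact hBpat _ _ (hcomp (σ⁻¹ a)).2.2
        · intro a t ht
          rw [hxk a] at ht
          exact hApat _ _ ((hcomp (σ⁻¹ a)).2.1 t ht)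
      have hxeq := huniq x hlink
      apply hne
      have hσeq : σ = σ₀ := by
        have h1 : x.1 = x₀.1 := by rw [hxeq]
        have h2 : x.1 = σ⁻¹ := rfl
        rw [hσ₀, ← h1, h2, inv_inv]
      have hheq : h = h₀ := by
        funext c s
        have h3 : x.2 (σ c) (s : ℕ) = GRaux.pad hl (h c) (s : ℕ) := by
          show GRaux.pad hl (h (σ⁻¹ (σ c))) (s : ℕ) = _
          rw [Equiv.Perm.inv_def, Equiv.symm_apply_apply]
        have h4 : x.2 (σ c) (s : ℕ) = x₀.2 (σ c) (s : ℕ) := by rw [hxeq]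
        have h5 : h c s = x₀.2 (σ c) (s : ℕ) := by
          rw [← h4, h3, GRaux.pad_fin]
        rw [h5, hh₀, hσeq]
      rw [hσeq, hheq]
  have hbad : ∑ p ∈ Finset.univ.filter
      (fun p : Equiv.Perm (Fin r) × (Fin r → Fin l → Fin n) =>
        ¬ GRaux.Good hl Jf p.2), F p = 0 := by
    have hbadOf : ∀ p : Equiv.Perm (Fin r) × (Fin r → Fin l → Fin n),
        p ∈ Finset.univ.filter
          (fun p : Equiv.Perm (Fin r) × (Fin r → Fin l → Fin n) =>
            ¬ GRaux.Good hl Jf p.2) → GRaux.Bad hl Jf p.2 := fun p hp =>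
      (GRaux.not_good_iff_bad hl Jf p.2).1 (Finset.mem_filter.1 hp).2
    refine Finset.sum_involution
      (fun p hp =>
        (p.1 * Equiv.swap (GRaux.isel hl Jf p.2 (hbadOf p hp))
            (GRaux.jsel hl Jf p.2 (hbadOf p hp)),
          GRaux.hswap p.2 (GRaux.isel hl Jf p.2 (hbadOf p hp))
            (GRaux.jsel hl Jf p.2 (hbadOf p hp))
            (GRaux.tsel hl Jf p.2 (hbadOf p hp))))
      ?hcancel ?hne ?hmem ?hinv
    case hcancel =>
      intro p hp
      obtain ⟨hij, hmt⟩ := GRaux.sel_spec (hbadOf p hp)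
      set i := GRaux.isel hl Jf p.2 (hbadOf p hp) with hi
      set j := GRaux.jsel hl Jf p.2 (hbadOf p hp) with hj
      set q := GRaux.tsel hl Jf p.2 (hbadOf p hp) with hq
      have hWeq : W (p.1 * Equiv.swap i j) (GRaux.hswap p.2 i j q) =
          W p.1 p.2 := by
        rw [hW]
        refine GRaux.prod_swap_pair _ _ i j hij ?_ ?_
        · intro c hci hcj
          simp only [Equiv.Perm.mul_apply,
            Equiv.swap_apply_of_ne_of_ne hci hcj,
            GRaux.hswap_other hci hcj]
        · rw [GRaux.hswap_i, GRaux.hswap_j hij]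
          simp only [Equiv.Perm.mul_apply, Equiv.swap_apply_left,
            Equiv.swap_apply_right]
          exact GRaux.wt_pair hl A B (GRaux.kk_le Jf i) (GRaux.kk_le Jf j)
            hmt.1 hmt.2.1 (p.2 i) (p.2 j) hmt.2.2 (If (p.1 i)) (If (p.1 j))
            (Jf i).2 (Jf j).2
      have hsgn : ((Equiv.Perm.sign (p.1 * Equiv.swap i j) : ℤ) : ℝ) =
          -((Equiv.Perm.sign p.1 : ℤ) : ℝ) := by
        rw [Equiv.Perm.sign_mul, Equiv.Perm.sign_swap hij]
        simp
      simp only [hF]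
      rw [hWeq, hsgn]
      ring
    case hne =>
      intro p hp hFne heq
      obtain ⟨hij, -⟩ := GRaux.sel_spec (hbadOf p hp)
      have h1 := congrArg Prod.fst heq
      simp only at h1
      exact hij (Equiv.swap_eq_one_iff.1 (mul_eq_left.1 h1))
    case hmem =>
      intro p hp
      obtain ⟨hb', -⟩ := GRaux.swap_sel (hbadOf p hp)
      exact Finset.mem_filter.2 ⟨Finset.mem_univ _,
        (GRaux.not_good_iff_bad hl Jf _).2 hb'⟩
    case hinv =>
      intro p hp
      obtain ⟨hij, -⟩ := GRaux.sel_spec (hbadOf p hp)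
      obtain ⟨hb', hie, hte, hje⟩ := GRaux.swap_sel (hbadOf p hp)
      have e : ∀ (I J : Fin r) (Q : ℕ),
          I = GRaux.isel hl Jf p.2 (hbadOf p hp) →
          J = GRaux.jsel hl Jf p.2 (hbadOf p hp) →
          Q = GRaux.tsel hl Jf p.2 (hbadOf p hp) →
          (p.1 * Equiv.swap (GRaux.isel hl Jf p.2 (hbadOf p hp))
              (GRaux.jsel hl Jf p.2 (hbadOf p hp)) * Equiv.swap I J,
            GRaux.hswap (GRaux.hswap p.2 (GRaux.isel hl Jf p.2 (hbadOf p hp))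
              (GRaux.jsel hl Jf p.2 (hbadOf p hp))
              (GRaux.tsel hl Jf p.2 (hbadOf p hp))) I J Q) = p := by
        rintro I J Q rfl rfl rfl
        refine Prod.ext_iff.2 ⟨?_, ?_⟩
        · rw [mul_assoc, Equiv.swap_mul_self, mul_one]
        · exact GRaux.hswap_hswap hij
      exact e _ _ _ hie hje hte
    
  have hdetval : Msub.det = ((Equiv.Perm.sign σ₀ : ℤ) : ℝ) := by
    rw [hdet, ← Finset.sum_filter_add_sum_filter_not Finset.univ
      (fun p : Equiv.Perm (Fin r) × (Fin r → Fin l → Fin n) =>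
        GRaux.Good hl Jf p.2) F, hgood, hbad, add_zero]
  have hdetne : Msub.det ≠ 0 := by
    rw [hdetval]
    exact Int.cast_ne_zero.2 (Units.ne_zero _)
  have hrank : Msub.rank = r := by
    rw [Matrix.rank_of_isUnit Msub ((Matrix.isUnit_iff_isUnit_det Msub).2
      (isUnit_iff_ne_zero.2 hdetne)), Fintype.card_fin]
  have hle : Msub.rank ≤ (ctrlMat A B l).rank := by
    have e1 : (1 : Matrix (Fin n) (Fin n) ℝ).submatrix If (⇑(Equiv.refl (Fin n)))
        * ctrlMat A B l = (ctrlMat A B l).submatrix If id := by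
      rw [Matrix.one_submatrix_mul]
      rfl
    have e2 : (ctrlMat A B l).submatrix If id *
        (1 : Matrix (Fin l × Fin m) (Fin l × Fin m) ℝ).submatrix
          (⇑(Equiv.refl (Fin l × Fin m))) Jf = Msub := by
      rw [Matrix.mul_submatrix_one, hMsub, Matrix.submatrix_submatrix]
      rfl
    calc Msub.rank = ((1 : Matrix (Fin n) (Fin n) ℝ).submatrix If
          (⇑(Equiv.refl (Fin n))) * ctrlMat A B l *
          (1 : Matrix (Fin l × Fin m) (Fin l × Fin m) ℝ).submatrix
            (⇑(Equiv.refl (Fin l × Fin m))) Jf).rank := by rw [e1, e2]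
      _ ≤ ((1 : Matrix (Fin n) (Fin n) ℝ).submatrix If (⇑(Equiv.refl (Fin n)))
          * ctrlMat A B l).rank := Matrix.rank_mul_le_left _ _
      _ ≤ (ctrlMat A B l).rank := Matrix.rank_mul_le_right _ _
  omega
end

section
/- Genericity of the structural controllability index: let (A,B) be structured matrices with nonzero entries being independent real parameters, and suppose the structural controllability index is μ(A,B) = h, defined via generic ranks: h = min{k : gk C_k(A,B) = gk C_{k+1}(A,B)}. Then the set of parameter values (Ã,B̃) for which the (numerical) controllability index of (Ã,B̃) differs from h is contained in a proper algebraic variety of the parameter space; i.e., almost all realizations of (A,B) have controllability index exactly h. -/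
open MvPolynomial Matrix

/-- The realization of a structured matrix with zero-nonzero pattern `p`
obtained by assigning the values `θ` to the free (nonzero) entries, all other
entries being fixed zeros. -/
def structReal {α β : Type*} (p : α → β → Bool) (θ : α → β → ℝ) :
    Matrix α β ℝ :=
  fun i j => if p i j then θ i j else 0

/- ### Auxiliary rank/minor lemmas -/

/-- A nonzero `r × r` minor forces rank at least `r`. -/
lemma aux_rank_ge {N r : ℕ} {ι : Type*} [Fintype ι] [DecidableEq ι]
    (M : Matrix (Fin N) ι ℝ) (f : Fin r → Fin N) (g : Fin r → ι)
    (hdet : (M.submatrix f g).det ≠ 0) : r ≤ M.rank := by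
  classical
  set P : Matrix (Fin r) (Fin N) ℝ := Matrix.of fun a b => if f a = b then 1 else 0 with hP
  set Q : Matrix ι (Fin r) ℝ := Matrix.of fun b c => if b = g c then 1 else 0 with hQ
  have hPMQ : P * (M * Q) = M.submatrix f g := by
    ext a c
    simp [Matrix.mul_apply, hP, hQ, Finset.sum_ite_eq, Finset.sum_ite_eq',
      Matrix.submatrix_apply]
  have hunit : IsUnit (M.submatrix f g) :=
    (Matrix.isUnit_iff_isUnit_det _).2 (isUnit_iff_ne_zero.2 hdet)
  have h1 : (M.submatrix f g).rank = r := by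
    rw [Matrix.rank_of_isUnit _ hunit, Fintype.card_fin]
  calc r = (P * (M * Q)).rank := by rw [hPMQ, h1]
    _ ≤ (M * Q).rank := Matrix.rank_mul_le_right _ _
    _ ≤ M.rank := Matrix.rank_mul_le_left _ _

/-- A full-rank square real matrix has nonzero determinant. -/
lemma aux_det_ne_zero {r : ℕ} (S : Matrix (Fin r) (Fin r) ℝ) (h : S.rank = r) :
    S.det ≠ 0 := by
  have htop : LinearMap.range S.mulVecLin = ⊤ := by
    apply Submodule.eq_top_of_finrank_eq
    rw [← Matrix.rank, h, Module.finrank_fin_fun]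
  have hsurj : Function.Surjective S.mulVec := by
    intro v
    obtain ⟨w, hw⟩ := (LinearMap.range_eq_top.1 htop) v
    exact ⟨w, hw⟩
  have := Matrix.mulVec_surjective_iff_isUnit.1 hsurj
  exact ((Matrix.isUnit_iff_isUnit_det _).1 this).ne_zero

/-- Column extraction: one can select `rank` many columns preserving the rank. -/
lemma aux_cols {ι κ : Type*} [Fintype ι] [Fintype κ] (A : Matrix ι κ ℝ) {r : ℕ}
    (hr : A.rank = r) : ∃ g : Fin r → κ, (A.submatrix id g).rank = r := by
  classical
  obtain ⟨t, hts, hspan, hli⟩ := exists_linearIndependent ℝ (Set.range Aᵀ)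
  have htfin : t.Finite := (Set.finite_range Aᵀ).subset hts
  haveI : Fintype t := htfin.fintype
  have hcard : Fintype.card t = r := by
    have h1 : Module.finrank ℝ (Submodule.span ℝ t) = t.toFinset.card :=
      finrank_span_set_eq_card hli
    have h2 : Module.finrank ℝ (Submodule.span ℝ t) = r := by
      rw [hspan]; exact (Matrix.rank_eq_finrank_span_cols A).symm.trans hr
    rw [h2] at h1
    rw [← Set.toFinset_card, ← h1]
  let e : Fin r ≃ t := (Fintype.equivFinOfCardEq hcard).symm
  have hchoice : ∀ j : Fin r, ∃ c : κ, Aᵀ c = (e j : ι → ℝ) := fun j => hts (e j).2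
  choose g hg using hchoice
  refine ⟨g, ?_⟩
  have hTr : (A.submatrix id g)ᵀ = fun j => Aᵀ (g j) := by
    ext j i; simp [Matrix.submatrix_apply, Matrix.transpose_apply]
  have hrange : Set.range (fun j => Aᵀ (g j)) = t := by
    apply Set.eq_of_subset_of_subset
    · rintro x ⟨j, rfl⟩
      show Aᵀ (g j) ∈ t
      rw [hg j]; exact (e j).2
    · intro x hx
      refine ⟨e.symm ⟨x, hx⟩, ?_⟩
      show Aᵀ (g (e.symm ⟨x, hx⟩)) = x
      rw [hg]; simp
  rw [Matrix.rank_eq_finrank_span_cols]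
  show Module.finrank ℝ (Submodule.span ℝ (Set.range (A.submatrix id g)ᵀ)) = r
  rw [hTr, hrange, hspan]; exact (Matrix.rank_eq_finrank_span_cols A).symm.trans hr

/-- A matrix of rank `r` has a nonzero `r × r` minor. -/
lemma aux_exists_minor {N : ℕ} {ι : Type*} [Fintype ι] (M : Matrix (Fin N) ι ℝ)
    {r : ℕ} (hr : M.rank = r) :
    ∃ (f : Fin r → Fin N) (g : Fin r → ι), (M.submatrix f g).det ≠ 0 := by
  classical
  obtain ⟨g, hg⟩ := aux_cols M hr
  have ht : (M.submatrix id g)ᵀ.rank = r := by rw [Matrix.rank_transpose, hg]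
  obtain ⟨f, hf⟩ := aux_cols (M.submatrix id g)ᵀ ht
  refine ⟨f, g, ?_⟩
  have hS : (M.submatrix id g)ᵀ.submatrix id f = (M.submatrix f g)ᵀ := by
    ext a b; simp [Matrix.submatrix_apply, Matrix.transpose_apply]
  have hrank : ((M.submatrix f g)ᵀ).rank = r := by rw [← hS, hf]
  have := aux_det_ne_zero _ hrank
  rwa [Matrix.det_transpose] at this

/-- Genericity of the structural controllability index: let `(A,B)` be a
structured pair with patterns `pA, pB` whose nonzero entries are independent
real parameters `(θA, θB)`, let `g k` be the generic rank of `C_k(A,B)` (the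
maximum of `rank C_k` over all realizations, attained by some realization), and
let `h ≥ 1` be the least index with `g h = g (h+1)` (the structural
controllability index). Then the realizations whose numerical controllability
index differs from `h` are contained in a proper algebraic variety of the
parameter space: there is a nonzero polynomial `q` in the entry parameters such
that every realization at which `q` does not vanish has controllability index
exactly `h`. -/
theorem structCtrlIndex_generic {n m : ℕ}
    (pA : Fin n → Fin n → Bool) (pB : Fin n → Fin m → Bool)
    (g : ℕ → ℕ)
    (hub : ∀ (k : ℕ) (θA : Fin n → Fin n → ℝ) (θB : Fin n → Fin m → ℝ),
      (ctrlMat (structReal pA θA) (structReal pB θB) k).rank ≤ g k)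
    (hat : ∀ k : ℕ, ∃ (θA : Fin n → Fin n → ℝ) (θB : Fin n → Fin m → ℝ),
      (ctrlMat (structReal pA θA) (structReal pB θB) k).rank = g k)
    (h : ℕ) (hh1 : 1 ≤ h) (hh2 : g h = g (h + 1))
    (hh3 : ∀ k, 1 ≤ k → k < h → g k ≠ g (k + 1)) :
    ∃ q : MvPolynomial ((Fin n × Fin n) ⊕ (Fin n × Fin m)) ℝ, q ≠ 0 ∧
      ∀ (θA : Fin n → Fin n → ℝ) (θB : Fin n → Fin m → ℝ),
        MvPolynomial.eval
            (Sum.elim (fun e => θA e.1 e.2) (fun e => θB e.1 e.2)) q ≠ 0 →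
        sInf {k : ℕ | 1 ≤ k ∧
            (ctrlMat (structReal pA θA) (structReal pB θB) k).rank =
              (ctrlMat (structReal pA θA) (structReal pB θB) (k + 1)).rank}
          = h := by
  classical
  set σ := ((Fin n × Fin n) ⊕ (Fin n × Fin m)) with hσ
  -- polynomial structured matrices
  set PA : Matrix (Fin n) (Fin n) (MvPolynomial σ ℝ) :=
    Matrix.of fun i j => if pA i j then X (Sum.inl (i, j)) else 0 with hPA
  set PB : Matrix (Fin n) (Fin m) (MvPolynomial σ ℝ) :=
    Matrix.of fun i j => if pB i j then X (Sum.inr (i, j)) else 0 with hPB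
  -- polynomial controllability matrices
  set PC : ∀ k : ℕ, Matrix (Fin n) (Fin k × Fin m) (MvPolynomial σ ℝ) :=
    fun k => Matrix.of fun i jc => (PA ^ (jc.1 : ℕ) * PB) i jc.2 with hPC
  -- The map fact
  have hmap : ∀ (θA : Fin n → Fin n → ℝ) (θB : Fin n → Fin m → ℝ) (k : ℕ),
      (PC k).map (eval (Sum.elim (fun e => θA e.1 e.2) (fun e => θB e.1 e.2)))
        = ctrlMat (structReal pA θA) (structReal pB θB) k := by
    intro θA θB k
    set v := Sum.elim (fun e : Fin n × Fin n => θA e.1 e.2)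
      (fun e : Fin n × Fin m => θB e.1 e.2) with hv
    have hA : PA.map (eval v) = structReal pA θA := by
      ext i j
      simp [hPA, Matrix.map_apply, structReal, apply_ite (eval v), hv]
      split_ifs <;> simp
    have hB : PB.map (eval v) = structReal pB θB := by
      ext i j
      simp [hPB, Matrix.map_apply, structReal, apply_ite (eval v), hv]
      split_ifs <;> simp
    ext i jc
    have hpow : (PA ^ (jc.1 : ℕ)).map (eval v) = (PA.map (eval v)) ^ (jc.1 : ℕ) := by
      have := map_pow ((eval v).mapMatrix (m := Fin n)) PA (jc.1 : ℕ)
      simpa [RingHom.mapMatrix_apply] using this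
    calc ((PC k).map (eval v)) i jc
        = eval v ((PA ^ (jc.1 : ℕ) * PB) i jc.2) := rfl
      _ = (((PA ^ (jc.1 : ℕ)).map (eval v)) * (PB.map (eval v))) i jc.2 := by
          rw [← Matrix.map_mul]; rfl
      _ = ctrlMat (structReal pA θA) (structReal pB θB) k i jc := by
          rw [hpow, hA, hB]; rfl
  -- the per-k genericity polynomial
  set Q : ℕ → MvPolynomial σ ℝ := fun k =>
    ∑ p : (Fin (g k) → Fin n) × (Fin (g k) → Fin k × Fin m),
      ((PC k).submatrix p.1 p.2).det ^ 2 with hQdef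
  -- evaluation of Q
  have hevalQ : ∀ (v : σ → ℝ) (k : ℕ),
      eval v (Q k) = ∑ p : (Fin (g k) → Fin n) × (Fin (g k) → Fin k × Fin m),
        (((PC k).map (eval v)).submatrix p.1 p.2).det ^ 2 := by
    intro v k
    rw [hQdef]
    rw [map_sum]
    refine Finset.sum_congr rfl fun p _ => ?_
    rw [map_pow, RingHom.map_det]
    simp [RingHom.mapMatrix_apply, Matrix.submatrix_map]
  -- Q k is nonzero
  have hQne : ∀ k, Q k ≠ 0 := by
    intro k
    obtain ⟨θA, θB, hθ⟩ := hat k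
    set v := Sum.elim (fun e : Fin n × Fin n => θA e.1 e.2)
      (fun e : Fin n × Fin m => θB e.1 e.2) with hv
    obtain ⟨f, g', hdet⟩ := aux_exists_minor
      (ctrlMat (structReal pA θA) (structReal pB θB) k) hθ
    intro hQ0
    have : eval v (Q k) = 0 := by rw [hQ0, map_zero]
    rw [hevalQ v k, hmap θA θB k] at this
    have hpos : (0 : ℝ) <
        ∑ p : (Fin (g k) → Fin n) × (Fin (g k) → Fin k × Fin m),
          ((ctrlMat (structReal pA θA) (structReal pB θB) k).submatrix p.1 p.2).det ^ 2 := by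
      refine Finset.sum_pos' (fun p _ => sq_nonneg _) ⟨(f, g'), Finset.mem_univ _, ?_⟩
      show (0 : ℝ) <
        ((ctrlMat (structReal pA θA) (structReal pB θB) k).submatrix f g').det ^ 2
      exact lt_of_le_of_ne (sq_nonneg _) (Ne.symm (pow_ne_zero 2 hdet))
    exact absurd this hpos.ne'
  -- nonvanishing of eval of Q k forces rank = g k
  have hQrank : ∀ (θA : Fin n → Fin n → ℝ) (θB : Fin n → Fin m → ℝ) (k : ℕ),
      eval (Sum.elim (fun e => θA e.1 e.2) (fun e => θB e.1 e.2)) (Q k) ≠ 0 →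
      (ctrlMat (structReal pA θA) (structReal pB θB) k).rank = g k := by
    intro θA θB k hne
    rw [hevalQ _ k, hmap θA θB k] at hne
    have : ∃ p : (Fin (g k) → Fin n) × (Fin (g k) → Fin k × Fin m),
        ((ctrlMat (structReal pA θA) (structReal pB θB) k).submatrix p.1 p.2).det ≠ 0 := by
      by_contra hall
      push_neg at hall
      exact hne (Finset.sum_eq_zero fun p _ => by rw [hall p, zero_pow (by norm_num)])
    obtain ⟨p, hp⟩ := this
    exact le_antisymm (hub k θA θB) (aux_rank_ge _ p.1 p.2 hp)
  -- the final polynomial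
  refine ⟨∏ k ∈ Finset.range (h + 2), Q k, ?_, ?_⟩
  · exact Finset.prod_ne_zero_iff.2 fun k _ => hQne k
  · intro θA θB hq
    rw [map_prod] at hq
    have hk : ∀ k, k ≤ h + 1 →
        (ctrlMat (structReal pA θA) (structReal pB θB) k).rank = g k := by
      intro k hkle
      refine hQrank θA θB k ?_
      exact Finset.prod_ne_zero_iff.1 hq k (Finset.mem_range.2 (by omega))
    have hmem : h ∈ {k : ℕ | 1 ≤ k ∧
        (ctrlMat (structReal pA θA) (structReal pB θB) k).rank =
          (ctrlMat (structReal pA θA) (structReal pB θB) (k + 1)).rank} := by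
      refine ⟨hh1, ?_⟩
      rw [hk h (by omega), hk (h + 1) (by omega), hh2]
    refine le_antisymm (Nat.sInf_le hmem) ?_
    refine le_csInf ⟨h, hmem⟩ ?_
    rintro k ⟨hk1, hkeq⟩
    by_contra hlt
    push_neg at hlt
    have hklt : k < h := hlt
    rw [hk k (by omega), hk (k + 1) (by omega)] at hkeq
    exact hh3 k hk1 hklt hkeq
end
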